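/- arXiv:2009.14106 — 9 statements merged into one kernel-verified Lean document; each statement's English description precedes it below -/
import Mathlib

section
/- Let f : [0,1] → [0,1] be an increasing homeomorphism. If there exists a Borel set N ⊆ [0,1] with Lebesgue measure zero such that f(N) has Lebesgue measure 1, then the 1-dimensional Hausdorff measure of the graph of f is at least 2. -/
open MeasureTheory Set Filter Topology

/-- If an increasing homeomorphism `f` of `[0,1]` maps a Lebesgue null Borel set
`N ⊆ [0,1]` to a set of measure `1`, then the 1-dimensional Hausdorff measure of
the graph of `f` (as a subset of the Euclidean plane) is at least `2`. -/
theorem stmt2 (f : ℝ → ℝ) (hc : ContinuousOn f (Icc 0 1))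
    (hm : StrictMonoOn f (Icc 0 1)) (h0 : f 0 = 0) (h1 : f 1 = 1)
    (N : Set ℝ) (hNsub : N ⊆ Icc 0 1) (hNmeas : MeasurableSet N)
    (hN0 : volume N = 0) (hN1 : volume (f '' N) = 1) :
    2 ≤ Measure.hausdorffMeasure 1
      {p : EuclideanSpace ℝ (Fin 2) | ∃ x ∈ Icc (0 : ℝ) 1,
        p = (WithLp.equiv 2 (Fin 2 → ℝ)).symm ![x, f x]} := by
  set G : Set (EuclideanSpace ℝ (Fin 2)) :=
    {p | ∃ x ∈ Icc (0 : ℝ) 1, p = (WithLp.equiv 2 (Fin 2 → ℝ)).symm ![x, f x]} with hG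
  -- coordinate projections are 1-Lipschitz
  have hproj : ∀ i : Fin 2, LipschitzWith 1 (fun p : EuclideanSpace ℝ (Fin 2) => p i) := by
    intro i
    have h1' := (LipschitzWith.eval (α := fun _ : Fin 2 => ℝ) i).comp
      (PiLp.lipschitzWith_ofLp 2 (fun _ : Fin 2 => ℝ))
    rw [mul_one] at h1'
    exact h1'
  have key : ∀ (i : Fin 2) (s : Set (EuclideanSpace ℝ (Fin 2))),
      volume ((fun p : EuclideanSpace ℝ (Fin 2) => p i) '' s) ≤ μH[1] s := by
    intro i s
    have h := (hproj i).hausdorffMeasure_image_le (zero_le_one) s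
    rw [MeasureTheory.hausdorffMeasure_real] at h
    simpa using h
  -- the set of points with first coordinate in N
  set S : Set (EuclideanSpace ℝ (Fin 2)) := {p | p 0 ∈ N} with hS
  have hSmeas : MeasurableSet S := by
    exact (hproj 0).continuous.measurable hNmeas
  have hsplit : μH[1] (G ∩ S) + μH[1] (G \ S) = μH[1] G :=
    measure_inter_add_diff G hSmeas
  -- lower bound for graph over N : project to y axis
  have hpt : ∀ x : ℝ, ((WithLp.equiv 2 (Fin 2 → ℝ)).symm ![x, f x] : EuclideanSpace ℝ (Fin 2)) 0 = x := by
    intro x; rfl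
  have hpt1 : ∀ x : ℝ, ((WithLp.equiv 2 (Fin 2 → ℝ)).symm ![x, f x] : EuclideanSpace ℝ (Fin 2)) 1 = f x := by
    intro x; rfl
  have h1le : 1 ≤ μH[1] (G ∩ S) := by
    have himg : f '' N ⊆ (fun p : EuclideanSpace ℝ (Fin 2) => p 1) '' (G ∩ S) := by
      rintro y ⟨x, hxN, rfl⟩
      exact ⟨(WithLp.equiv 2 (Fin 2 → ℝ)).symm ![x, f x],
        ⟨⟨x, hNsub hxN, rfl⟩, by simpa [hS, hpt x] using hxN⟩, hpt1 x⟩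
    calc (1 : ENNReal) = volume (f '' N) := hN1.symm
      _ ≤ volume ((fun p : EuclideanSpace ℝ (Fin 2) => p 1) '' (G ∩ S)) :=
        measure_mono himg
      _ ≤ μH[1] (G ∩ S) := key 1 _
  have h2le : 1 ≤ μH[1] (G \ S) := by
    have himg : Icc (0:ℝ) 1 \ N ⊆ (fun p : EuclideanSpace ℝ (Fin 2) => p 0) '' (G \ S) := by
      rintro x ⟨hx, hxN⟩
      exact ⟨(WithLp.equiv 2 (Fin 2 → ℝ)).symm ![x, f x],
        ⟨⟨x, hx, rfl⟩, by simpa [hS, hpt x] using hxN⟩, hpt x⟩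
    have hvol : volume (Icc (0:ℝ) 1 \ N) = 1 := by
      rw [measure_diff_null hN0, Real.volume_Icc]
      norm_num
    calc (1 : ENNReal) = volume (Icc (0:ℝ) 1 \ N) := hvol.symm
      _ ≤ volume ((fun p : EuclideanSpace ℝ (Fin 2) => p 0) '' (G \ S)) :=
        measure_mono himg
      _ ≤ μH[1] (G \ S) := key 0 _
  calc (2 : ENNReal) = 1 + 1 := by norm_num
    _ ≤ μH[1] (G ∩ S) + μH[1] (G \ S) := add_le_add h1le h2le
    _ = μH[1] G := hsplit
end

section
/- Let H ⊆ ℝ^d be a Borel set and f : H → ℝ^d be Borel measurable. If f is differentiable at almost every x ∈ H with det f'(x) = 0, then for almost every x ∈ H, the ratio λ^d(f(B(x,r) ∩ H)) / λ^d(B(x,r)) tends to 0 as r → 0⁺. -/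
open MeasureTheory Metric Set Filter Topology Pointwise Module

/-- If a Borel map `f` on a Borel set `H ⊆ ℝ^d` is differentiable (within `H`)
at almost every point of `H` with singular derivative, then for almost every
`x ∈ H` the ratio `λ(f(B(x,r) ∩ H)) / λ(B(x,r))` tends to `0` as `r → 0⁺`. -/
theorem stmt3 (d : ℕ) (H : Set (EuclideanSpace ℝ (Fin d))) (hH : MeasurableSet H)
    (f : EuclideanSpace ℝ (Fin d) → EuclideanSpace ℝ (Fin d)) (hf : Measurable f)
    (hdiff : ∀ᵐ x ∂(volume.restrict H),
      ∃ L : EuclideanSpace ℝ (Fin d) →L[ℝ] EuclideanSpace ℝ (Fin d),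
        HasFDerivWithinAt f L H x ∧ L.det = 0) :
    ∀ᵐ x ∂(volume.restrict H),
      Tendsto (fun r : ℝ =>
          volume (f '' (closedBall x r ∩ H)) / volume (closedBall x r))
        (𝓝[>] 0) (𝓝 0) := by
  filter_upwards [hdiff] with x hx
  obtain ⟨L, hL, hdet⟩ := hx
  -- the image of the unit ball under the singular map `L` is a null compact set
  set K : Set (EuclideanSpace ℝ (Fin d)) := L '' closedBall 0 1 with hKdef
  have hKcomp : IsCompact K := (isCompact_closedBall (0 : EuclideanSpace ℝ (Fin d)) 1).image L.continuous
  have hK0 : volume K = 0 := by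
    refine measure_mono_null (t := (LinearMap.range (L : EuclideanSpace ℝ (Fin d) →ₗ[ℝ] EuclideanSpace ℝ (Fin d)) : Set (EuclideanSpace ℝ (Fin d)))) ?_ ?_
    · rintro _ ⟨v, -, rfl⟩; exact LinearMap.mem_range_self _ v
    · exact Measure.addHaar_submodule _ _ (LinearMap.range_lt_top_of_det_eq_zero hdet).ne
  set c := volume (ball (0 : EuclideanSpace ℝ (Fin d)) 1) with hc
  have hc0 : c ≠ 0 := (measure_ball_pos _ _ one_pos).ne'
  have hctop : c ≠ ⊤ := measure_ball_lt_top.ne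
  rw [ENNReal.tendsto_nhds_zero]
  intro ε' hε'
  -- choose ε such that the ε-thickening of K has measure ≤ ε' * c
  obtain ⟨ε, hεth, εpos⟩ : ∃ ε, volume (cthickening ε K) ≤ ε' * c ∧ 0 < ε := by
    have h1 : (0 : ENNReal) < ε' * c := ENNReal.mul_pos hε'.ne' hc0
    have h2 : Tendsto (fun ε => volume (cthickening ε K)) (𝓝[>] (0:ℝ)) (𝓝 0) := by
      rw [← hK0]
      exact (tendsto_measure_cthickening_of_isCompact hKcomp).mono_left nhdsWithin_le_nhds
    exact ((h2.eventually_le_const h1).and self_mem_nhdsWithin).exists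
  -- choose δ from differentiability
  have hlit : ∀ᶠ y in 𝓝[H] x, ‖f y - f x - L (y - x)‖ ≤ ε * ‖y - x‖ :=
    hL.isLittleO.def εpos
  obtain ⟨δ, δpos, hδ⟩ := Metric.mem_nhdsWithin_iff.1 hlit
  filter_upwards [Ioo_mem_nhdsGT_of_mem (Set.left_mem_Ico.2 δpos)] with r hr
  obtain ⟨rpos, rδ⟩ := hr
  -- inclusion of the image in a translated scaled thickening of K
  have hsub : f '' (closedBall x r ∩ H) ⊆ (fun w => f x + r • w) '' cthickening ε K := by
    rintro _ ⟨y, ⟨hyb, hyH⟩, rfl⟩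
    refine ⟨r⁻¹ • (f y - f x), ?_, by
      simp [smul_smul, mul_inv_cancel₀ rpos.ne']⟩
    have hyδ : y ∈ ball x δ ∩ H := ⟨lt_of_le_of_lt (mem_closedBall.1 hyb) rδ, hyH⟩
    have hest : ‖f y - f x - L (y - x)‖ ≤ ε * ‖y - x‖ := hδ hyδ
    refine mem_cthickening_of_dist_le _ (L (r⁻¹ • (y - x))) ε K ?_ ?_
    · refine ⟨r⁻¹ • (y - x), ?_, rfl⟩
      rw [mem_closedBall_zero_iff, norm_smul, norm_inv, Real.norm_of_nonneg rpos.le]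
      rw [inv_mul_le_iff₀ rpos, mul_one]
      simpa [dist_eq_norm] using mem_closedBall.1 hyb
    · rw [dist_eq_norm, L.map_smul, ← smul_sub, norm_smul, norm_inv, Real.norm_of_nonneg rpos.le]
      calc r⁻¹ * ‖f y - f x - L (y - x)‖ ≤ r⁻¹ * (ε * ‖y - x‖) := by
            exact mul_le_mul_of_nonneg_left hest (inv_nonneg.2 rpos.le)
        _ ≤ r⁻¹ * (ε * r) := by
            refine mul_le_mul_of_nonneg_left (mul_le_mul_of_nonneg_left ?_ εpos.le)
              (inv_nonneg.2 rpos.le)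
            simpa [dist_eq_norm] using mem_closedBall.1 hyb
        _ = ε := by field_simp
  -- measure computation
  have him : volume ((fun w => f x + r • w) '' cthickening ε K)
      = ENNReal.ofReal (r ^ (finrank ℝ (EuclideanSpace ℝ (Fin d)))) * volume (cthickening ε K) := by
    have : (fun w : EuclideanSpace ℝ (Fin d) => f x + r • w) '' cthickening ε K
        = (fun w : EuclideanSpace ℝ (Fin d) => f x + w) '' (r • cthickening ε K) := by
      rw [← Set.image_smul, Set.image_image]
    rw [this, Set.image_add_left, measure_preimage_add, Measure.addHaar_smul,
      abs_of_nonneg (pow_nonneg rpos.le _)]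
  have hcb : volume (closedBall x r) = ENNReal.ofReal (r ^ (finrank ℝ (EuclideanSpace ℝ (Fin d)))) * c :=
    Measure.addHaar_closedBall _ _ rpos.le
  have hr0 : ENNReal.ofReal (r ^ (finrank ℝ (EuclideanSpace ℝ (Fin d)))) ≠ 0 :=
    (ENNReal.ofReal_pos.2 (pow_pos rpos _)).ne'
  have hrtop : ENNReal.ofReal (r ^ (finrank ℝ (EuclideanSpace ℝ (Fin d)))) ≠ ⊤ := ENNReal.ofReal_ne_top
  calc volume (f '' (closedBall x r ∩ H)) / volume (closedBall x r)
      ≤ volume ((fun w => f x + r • w) '' cthickening ε K) / volume (closedBall x r) :=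
        ENNReal.div_le_div_right (measure_mono hsub) _
    _ = volume (cthickening ε K) / c := by
        rw [him, hcb, ENNReal.mul_div_mul_left _ _ hr0 hrtop]
    _ ≤ (ε' * c) / c := ENNReal.div_le_div_right hεth _
    _ = ε' := by rw [mul_div_assoc, ENNReal.div_self hc0 hctop, mul_one]
end

section
/- Let H ⊆ ℝ^d be a Borel set and f : H → ℝ^d be Borel measurable. If lim_{r→0⁺} λ^d(f(B(x,r) ∩ H)) / λ^d(B(x,r)) = 0 for almost every x ∈ H, then there exists a Borel set F ⊆ H with λ^d(H ∖ F) = 0 and λ^d(f(F)) = 0 (i.e., f is singular). -/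
open MeasureTheory Metric Set Filter Topology
open scoped ENNReal NNReal

/-- Auxiliary bound: if every point of `S` satisfies the vanishing-ratio condition,
`S ⊆ U` with `U` open, then the outer measure of `f '' S` is at most `N * (ε * volume U)`
where `N` is a Besicovitch constant. -/
private lemma stmt4_bound {d : ℕ} {H S U : Set (EuclideanSpace ℝ (Fin d))}
    {f : EuclideanSpace ℝ (Fin d) → EuclideanSpace ℝ (Fin d)}
    (hSH : S ⊆ H)
    (hT : ∀ x ∈ S, Tendsto (fun r : ℝ =>
        volume (f '' (closedBall x r ∩ H)) / volume (closedBall x r)) (𝓝[>] 0) (𝓝 0))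
    (hSU : S ⊆ U) (hU : IsOpen U) {N : ℕ} {τ : ℝ} (hτ : 1 < τ)
    (hN : IsEmpty (Besicovitch.SatelliteConfig (EuclideanSpace ℝ (Fin d)) N τ))
    {ε : ℝ≥0∞} (hε : 0 < ε) :
    volume (f '' S) ≤ N * (ε * volume U) := by
  classical
  -- choose a good radius for every point of `S`
  have hchoice : ∀ x : S, ∃ r : ℝ, 0 < r ∧ r ≤ 1 ∧ closedBall (x : EuclideanSpace ℝ (Fin d)) r ⊆ U
      ∧ volume (f '' (closedBall (x : EuclideanSpace ℝ (Fin d)) r ∩ H))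
        ≤ ε * volume (closedBall (x : EuclideanSpace ℝ (Fin d)) r) := by
    rintro ⟨x, hx⟩
    have hxU : x ∈ U := hSU hx
    obtain ⟨δ, hδpos, hδ⟩ := Metric.isOpen_iff.1 hU x hxU
    have h1 : ∀ᶠ r in 𝓝[>] (0 : ℝ),
        volume (f '' (closedBall x r ∩ H)) / volume (closedBall x r) < ε :=
      (hT x hx).eventually_lt_const hε
    have h2 : ∀ᶠ r in 𝓝[>] (0 : ℝ), r ∈ Set.Ioo (0 : ℝ) (min δ 1) :=
      Ioo_mem_nhdsGT_of_mem ⟨le_refl 0, lt_min hδpos one_pos⟩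
    obtain ⟨r, hr1, hr2⟩ := (h1.and h2).exists
    refine ⟨r, hr2.1, le_of_lt (lt_of_lt_of_le hr2.2 (min_le_right _ _)), ?_, ?_⟩
    · exact fun y hy => hδ (lt_of_le_of_lt (mem_closedBall.1 hy)
        (lt_of_lt_of_le hr2.2 (min_le_left _ _)))
    · have hpos : volume (closedBall x r) ≠ 0 :=
        (measure_closedBall_pos volume x hr2.1).ne'
      have hfin : volume (closedBall x r) ≠ ⊤ := measure_closedBall_lt_top.ne
      exact le_of_lt ((ENNReal.div_lt_iff (Or.inl hpos) (Or.inl hfin)).1 hr1)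
  choose rad hrad_pos hrad_le hrad_sub hrad_meas using hchoice
  -- apply the topological Besicovitch covering theorem
  set q : Besicovitch.BallPackage S (EuclideanSpace ℝ (Fin d)) :=
    { c := Subtype.val, r := rad, rpos := hrad_pos, r_bound := 1, r_le := hrad_le }
  obtain ⟨s, hs_disj, hs_cov⟩ := Besicovitch.exist_disjoint_covering_families hτ hN q
  -- covering of the image
  have himage : f '' S ⊆ ⋃ i : Fin N, ⋃ j ∈ s i,
      f '' (closedBall (j : EuclideanSpace ℝ (Fin d)) (rad j) ∩ H) := by
    rintro _ ⟨x, hx, rfl⟩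
    have : (x : EuclideanSpace ℝ (Fin d)) ∈ ⋃ i : Fin N, ⋃ j ∈ s i,
        ball (q.c j) (q.r j) := hs_cov ⟨⟨x, hx⟩, rfl⟩
    simp only [mem_iUnion] at this
    obtain ⟨i, j, hj, hxj⟩ := this
    refine mem_iUnion.2 ⟨i, mem_iUnion.2 ⟨j, mem_iUnion.2 ⟨hj, ?_⟩⟩⟩
    exact mem_image_of_mem _ ⟨ball_subset_closedBall hxj, hSH hx⟩
  refine le_trans (measure_mono himage) (le_trans (measure_iUnion_fintype_le _ _) ?_)
  have key : ∀ i : Fin N, volume (⋃ j ∈ s i,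
      f '' (closedBall (j : EuclideanSpace ℝ (Fin d)) (rad j) ∩ H)) ≤ ε * volume U := by
    intro i
    have hcnt : (s i).Countable := by
      refine (hs_disj i).countable_of_nonempty_interior fun j _ => ?_
      rw [interior_closedBall _ (hrad_pos j).ne']
      exact nonempty_ball.2 (hrad_pos j)
    refine le_trans (measure_biUnion_le volume hcnt _) ?_
    have hle : ∀ j : s i, volume (f '' (closedBall ((j : S) : EuclideanSpace ℝ (Fin d))
        (rad j) ∩ H)) ≤ ε * volume (closedBall ((j : S) : EuclideanSpace ℝ (Fin d)) (rad j)) :=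
      fun j => hrad_meas j
    refine le_trans (ENNReal.tsum_le_tsum hle) ?_
    rw [ENNReal.tsum_mul_left]
    refine mul_le_mul_right ?_ ε
    have heq := measure_biUnion (μ := volume) hcnt (hs_disj i)
      (fun j _ => measurableSet_closedBall)
    rw [← heq]
    refine measure_mono (iUnion₂_subset fun j hj => hrad_sub j)
  calc ∑ i : Fin N, volume (⋃ j ∈ s i,
        f '' (closedBall (j : EuclideanSpace ℝ (Fin d)) (rad j) ∩ H))
      ≤ ∑ _i : Fin N, ε * volume U := Finset.sum_le_sum fun i _ => key i
    _ = N * (ε * volume U) := by simp [Finset.sum_const, nsmul_eq_mul]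

/-- If every point of `F` satisfies the vanishing-ratio condition, then `f '' F` is null. -/
private lemma stmt4_key {d : ℕ} {H F : Set (EuclideanSpace ℝ (Fin d))}
    {f : EuclideanSpace ℝ (Fin d) → EuclideanSpace ℝ (Fin d)}
    (hFH : F ⊆ H)
    (hT : ∀ x ∈ F, Tendsto (fun r : ℝ =>
        volume (f '' (closedBall x r ∩ H)) / volume (closedBall x r)) (𝓝[>] 0) (𝓝 0)) :
    volume (f '' F) = 0 := by
  obtain ⟨N, τ, hτ, hN⟩ :=
    HasBesicovitchCovering.no_satelliteConfig (α := EuclideanSpace ℝ (Fin d))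
  have hcover : f '' F ⊆ ⋃ n : ℕ, f '' (F ∩ ball (0 : EuclideanSpace ℝ (Fin d)) n) := by
    rintro _ ⟨x, hx, rfl⟩
    obtain ⟨n, hn⟩ := exists_nat_gt ‖x‖
    exact mem_iUnion.2 ⟨n, mem_image_of_mem _ ⟨hx, by simpa [mem_ball_zero_iff] using hn⟩⟩
  have hzero : ∀ n : ℕ, volume (f '' (F ∩ ball (0 : EuclideanSpace ℝ (Fin d)) n)) = 0 := by
    intro n
    set S := F ∩ ball (0 : EuclideanSpace ℝ (Fin d)) n
    set U := ball (0 : EuclideanSpace ℝ (Fin d)) n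
    have hUfin : volume U ≠ ⊤ := measure_ball_lt_top.ne
    have hbound : ∀ ε : ℝ≥0∞, 0 < ε → volume (f '' S) ≤ N * (ε * volume U) :=
      fun ε hε => stmt4_bound (fun x hx => hFH hx.1) (fun x hx => hT x hx.1)
        inter_subset_right isOpen_ball hτ hN hε
    refine le_antisymm ?_ zero_le
    refine ENNReal.le_of_forall_pos_le_add fun ε' hε' _ => ?_
    rw [zero_add]
    set C : ℝ≥0∞ := N * volume U + 1
    have hC0 : C ≠ 0 := by simp [C]
    have hCtop : C ≠ ⊤ := by
      refine ENNReal.add_ne_top.2 ⟨ENNReal.mul_ne_top (by simp) hUfin, by simp⟩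
    have hεpos : (0 : ℝ≥0∞) < (ε' : ℝ≥0∞) / C :=
      ENNReal.div_pos (by exact_mod_cast hε'.ne') hCtop
    refine le_trans (hbound _ hεpos) ?_
    have : (N : ℝ≥0∞) * ((ε' : ℝ≥0∞) / C * volume U) = (ε' : ℝ≥0∞) / C * (N * volume U) := by
      ring
    rw [this]
    calc (ε' : ℝ≥0∞) / C * (N * volume U) ≤ (ε' : ℝ≥0∞) / C * C := by
          refine mul_le_mul_right ?_ _
          exact le_trans le_self_add (le_refl C)
      _ = ε' := ENNReal.div_mul_cancel hC0 hCtop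
  refine le_antisymm (le_trans (measure_mono hcover)
    (le_trans (measure_iUnion_le _) ?_)) zero_le
  simp [hzero]

/-- If for almost every `x ∈ H` the ratio `λ(f(B(x,r) ∩ H)) / λ(B(x,r))` tends
to `0` as `r → 0⁺`, then `f` is singular: there is a Borel set `F ⊆ H` of full
measure in `H` whose image is Lebesgue null. -/
theorem stmt4 (d : ℕ) (H : Set (EuclideanSpace ℝ (Fin d))) (hH : MeasurableSet H)
    (f : EuclideanSpace ℝ (Fin d) → EuclideanSpace ℝ (Fin d)) (hf : Measurable f)
    (hlim : ∀ᵐ x ∂(volume.restrict H),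
      Tendsto (fun r : ℝ =>
          volume (f '' (closedBall x r ∩ H)) / volume (closedBall x r))
        (𝓝[>] 0) (𝓝 0)) :
    ∃ F : Set (EuclideanSpace ℝ (Fin d)), MeasurableSet F ∧ F ⊆ H ∧
      volume (H \ F) = 0 ∧ volume (f '' F) = 0 := by
  rw [ae_restrict_iff' hH] at hlim
  have hnull : volume {x | ¬ (x ∈ H → Tendsto (fun r : ℝ =>
      volume (f '' (closedBall x r ∩ H)) / volume (closedBall x r)) (𝓝[>] 0) (𝓝 0))} = 0 :=
    ae_iff.1 hlim
  obtain ⟨E, hEsub, hEmeas, hE0⟩ := exists_measurable_superset_of_null hnull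
  refine ⟨H \ E, hH.diff hEmeas, diff_subset, ?_, ?_⟩
  · refine measure_mono_null (fun x hx => ?_) hE0
    rcases hx with ⟨hxH, hxE⟩
    by_contra hxE'
    exact hxE ⟨hxH, hxE'⟩
  · refine stmt4_key diff_subset fun x hx => ?_
    by_contra hT
    exact hx.2 (hEsub (by simp [hx.1, hT]))
end

section
/- Let H ⊆ ℝ^d be a Borel set and f : H → ℝ^d a Borel measurable map that is differentiable at almost every point of H. If there exists a Borel set F ⊆ H with λ^d(H ∖ F) = 0 and λ^d(f(F)) = 0, then for almost every x ∈ H, f is differentiable at x with det f'(x) = 0. -/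
open MeasureTheory Metric Set Filter Topology

open scoped NNReal ENNReal

/-- Key step: if `f` has a derivative (within `s`) with nonzero determinant at every point of
`s`, and `f '' s` is null, then `s` is null. -/
lemma aux_null_of_image_null {E : Type*} [NormedAddCommGroup E] [NormedSpace ℝ E]
    [FiniteDimensional ℝ E] [MeasurableSpace E] [BorelSpace E]
    (μ : Measure E) [μ.IsAddHaarMeasure] (f : E → E) (s : Set E) (g : E → E →L[ℝ] E)
    (hg : ∀ x ∈ s, HasFDerivWithinAt f (g x) s x)
    (hdet : ∀ x ∈ s, (g x).det ≠ 0) (himg : μ (f '' s) = 0) : μ s = 0 := by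
  classical
  rcases s.eq_empty_or_nonempty with rfl | hne
  · simp
  have rex : ∀ A : E →L[ℝ] E, A.det ≠ 0 → ∃ δ : ℝ≥0, 0 < δ ∧
      ∀ (t : Set E) (f : E → E), ApproximatesLinearOn f A t δ →
        (((|A.det| / 2).toNNReal : ℝ≥0) : ℝ≥0∞) * μ t ≤ μ (f '' t) := by
    intro A hA
    have habs : 0 < |A.det| := abs_pos.2 hA
    have hm : (((|A.det| / 2).toNNReal : ℝ≥0) : ℝ≥0∞) < ENNReal.ofReal |A.det| :=
      (ENNReal.ofReal_lt_ofReal_iff habs).2 (by linarith)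
    have hev := (MeasureTheory.mul_le_addHaar_image_of_lt_det μ A hm).and
      (eventually_mem_nhdsWithin (a := (0 : ℝ≥0)) (s := Set.Ioi 0))
    obtain ⟨δ, hδ1, hδ2⟩ := hev.exists
    exact ⟨δ, hδ2, hδ1⟩
  let r : (E →L[ℝ] E) → ℝ≥0 := fun A => if h : A.det ≠ 0 then (rex A h).choose else 1
  have rpos : ∀ A, r A ≠ 0 := by
    intro A
    by_cases h : A.det ≠ 0
    · simp only [r, dif_pos h]; exact ((rex A h).choose_spec.1).ne'
    · simp only [r]; rw [dif_neg h]; exact one_ne_zero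
  obtain ⟨t, A, -, -, hcover, happrox, hAy⟩ :=
    exists_partition_approximatesLinearOn_of_hasFDerivWithinAt f s g hg r rpos
  have key : ∀ n, μ (s ∩ t n) = 0 := by
    intro n
    obtain ⟨y, hy, hAeq⟩ := hAy hne n
    have hdA : (A n).det ≠ 0 := by rw [hAeq]; exact hdet y hy
    have hr : r (A n) = (rex (A n) hdA).choose := by simp only [r, dif_pos hdA]
    have hap := happrox n
    rw [hr] at hap
    have h1 := (rex (A n) hdA).choose_spec.2 (s ∩ t n) f hap
    have h2 : μ (f '' (s ∩ t n)) = 0 :=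
      le_antisymm ((measure_mono (Set.image_mono (f := f) Set.inter_subset_left)).trans himg.le)
        (zero_le)
    rw [h2, nonpos_iff_eq_zero, mul_eq_zero] at h1
    rcases h1 with h1 | h1
    · exact absurd h1 (by
        have := abs_pos.2 hdA
        simp only [ENNReal.coe_eq_zero, Real.toNNReal_eq_zero, not_le]
        linarith)
    · exact h1
  refine nonpos_iff_eq_zero.1 ?_
  calc μ s ≤ μ (⋃ n, s ∩ t n) := measure_mono (fun x hx => by
        obtain ⟨n, hn⟩ := Set.mem_iUnion.1 (hcover hx)
        exact Set.mem_iUnion.2 ⟨n, hx, hn⟩)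
    _ ≤ ∑' n, μ (s ∩ t n) := measure_iUnion_le _
    _ = 0 := by simp [key]


/-- If a Borel map `f` on a Borel set `H ⊆ ℝ^d` is differentiable within `H` at
almost every point of `H`, and there is a Borel set `F ⊆ H` of full measure in
`H` with `λ(f(F)) = 0`, then at almost every `x ∈ H` the map `f` is
differentiable with singular derivative. -/
theorem stmt6 (d : ℕ) (H : Set (EuclideanSpace ℝ (Fin d))) (hH : MeasurableSet H)
    (f : EuclideanSpace ℝ (Fin d) → EuclideanSpace ℝ (Fin d)) (hf : Measurable f)
    (hdiff : ∀ᵐ x ∂(volume.restrict H),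
      ∃ L : EuclideanSpace ℝ (Fin d) →L[ℝ] EuclideanSpace ℝ (Fin d),
        HasFDerivWithinAt f L H x)
    (F : Set (EuclideanSpace ℝ (Fin d))) (hFmeas : MeasurableSet F) (hFH : F ⊆ H)
    (hF1 : volume (H \ F) = 0) (hF0 : volume (f '' F) = 0) :
    ∀ᵐ x ∂(volume.restrict H),
      ∃ L : EuclideanSpace ℝ (Fin d) →L[ℝ] EuclideanSpace ℝ (Fin d),
        HasFDerivWithinAt f L H x ∧ L.det = 0 := by
  classical
  set B : Set (EuclideanSpace ℝ (Fin d)) :=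
    {x | x ∈ F ∧ DifferentiableWithinAt ℝ f H x ∧ (fderivWithin ℝ f H x).det ≠ 0} with hBdef
  have hBF : B ⊆ F := fun x hx => hx.1
  have hB : volume B = 0 := by
    apply aux_null_of_image_null volume f B (fun x => fderivWithin ℝ f H x)
    · intro x hx
      exact (hx.2.1.hasFDerivWithinAt).mono (hBF.trans hFH)
    · exact fun x hx => hx.2.2
    · exact le_antisymm ((measure_mono (Set.image_mono (f := f) hBF)).trans hF0.le) (zero_le)
  have hFae : ∀ᵐ x ∂(volume.restrict H), x ∈ F := by
    have h0 : volume.restrict H Fᶜ = 0 := by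
      rw [Measure.restrict_apply hFmeas.compl]
      exact le_antisymm ((measure_mono (show Fᶜ ∩ H ⊆ H \ F from fun x hx => ⟨hx.2, hx.1⟩)).trans hF1.le) (zero_le)
    exact (MeasureTheory.measure_eq_zero_iff_ae_notMem.1 h0).mono fun x hx => not_not.1 hx
  have hBae : ∀ᵐ x ∂(volume.restrict H), x ∉ B :=
    ae_restrict_of_ae (MeasureTheory.measure_eq_zero_iff_ae_notMem.1 hB)
  filter_upwards [hdiff, hFae, hBae] with x hx hxF hxB
  obtain ⟨L, hL⟩ := hx
  have hd : DifferentiableWithinAt ℝ f H x := ⟨L, hL⟩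
  refine ⟨fderivWithin ℝ f H x, hd.hasFDerivWithinAt, ?_⟩
  by_contra h
  exact hxB ⟨hxF, hd, h⟩
end

section
/- Let f : [0,1] → [0,1] be an increasing homeomorphism. If the length of the graph of f equals 2, then f is differentiable with derivative 0 at almost every point of [0,1]. -/
open MeasureTheory Set Filter Topology

private lemma sqrt_deficit {A B M : ℝ} (hA : 0 ≤ A) (hB : 0 ≤ B) (hM : 0 ≤ M)
    (h1 : M ≤ A) (h2 : M ≤ B) : Real.sqrt (A ^ 2 + B ^ 2) ≤ A + B - M / 2 := by
  have h := Real.sqrt_le_sqrt (show A ^ 2 + B ^ 2 ≤ (A + B - M / 2) ^ 2 by nlinarith)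
  rwa [Real.sqrt_sq (by linarith)] at h

private lemma cover_Ioc {k : ℕ} {a : Fin (k + 1) → ℝ} (_ha : Monotone a) {x : ℝ}
    (hx : x ∈ Ioc (a 0) (a (Fin.last k))) :
    ∃ i : Fin k, x ∈ Ioc (a i.castSucc) (a i.succ) := by
  classical
  set s : Finset (Fin (k + 1)) := Finset.univ.filter (fun i => a i < x) with hs
  have h0s : (0 : Fin (k + 1)) ∈ s := by simp [hs, hx.1]
  have hsne : s.Nonempty := ⟨0, h0s⟩
  set j := s.max' hsne with hj
  have hjs : j ∈ s := s.max'_mem hsne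
  have hja : a j < x := by simpa [hs] using hjs
  have hjk : (j : ℕ) < k := by
    rcases lt_or_eq_of_le (Nat.lt_succ_iff.mp j.isLt) with h | h
    · exact h
    · exfalso
      have hlast : j = Fin.last k := Fin.ext h
      rw [hlast] at hja
      exact absurd hx.2 (not_le.mpr hja)
  have hcs : (⟨(j : ℕ), hjk⟩ : Fin k).castSucc = j := Fin.ext (by simp)
  refine ⟨⟨(j : ℕ), hjk⟩, ?_, ?_⟩
  · rw [hcs]; exact hja
  · by_contra h
    push_neg at h
    have hsucc : (⟨(j : ℕ), hjk⟩ : Fin k).succ ∈ s := by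
      rw [hs]
      simp only [Finset.mem_filter, Finset.mem_univ, true_and]
      exact h
    have hle := s.le_max' _ hsucc
    rw [← hj] at hle
    have hlt : (j : ℕ) < (((⟨(j : ℕ), hjk⟩ : Fin k).succ : Fin (k+1)) : ℕ) := by simp
    exact absurd (Fin.le_def.mp hle) (not_le.mpr hlt)

private lemma fin_telescope {k : ℕ} (a : Fin (k + 1) → ℝ) :
    ∑ i : Fin k, (a i.succ - a i.castSucc) = a (Fin.last k) - a 0 := by
  classical
  set b : ℕ → ℝ := fun n => a ⟨min n k, Nat.lt_succ_of_le (min_le_right n k)⟩ with hb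
  have hsum : ∑ i : Fin k, (a i.succ - a i.castSucc)
      = ∑ i ∈ Finset.range k, (b (i + 1) - b i) := by
    rw [← Fin.sum_univ_eq_sum_range (fun n => b (n + 1) - b n) k]
    apply Finset.sum_congr rfl
    intro i _
    have h1 : b ((i : ℕ) + 1) = a i.succ :=
      congrArg a (Fin.ext (by have := i.isLt; simp only [Fin.val_succ]; omega))
    have h2 : b (i : ℕ) = a i.castSucc :=
      congrArg a (Fin.ext (by have := i.isLt; simp only [Fin.coe_castSucc]; omega))
    rw [h1, h2]
  rw [hsum, Finset.sum_range_sub]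
  have hbk : b k = a (Fin.last k) := congrArg a (Fin.ext (by simp [Fin.last]))
  have hb0 : b 0 = a 0 := congrArg a (Fin.ext (by simp))
  rw [hbk, hb0]

/-- If the length of the graph of an increasing homeomorphism `f` of `[0,1]`
(the supremum of inscribed polygonal lengths) equals `2`, then `f` has
derivative `0` at almost every point of `[0,1]`. -/
theorem stmt7 (f : ℝ → ℝ) (hc : ContinuousOn f (Icc 0 1))
    (hm : StrictMonoOn f (Icc 0 1)) (h0 : f 0 = 0) (h1 : f 1 = 1)
    (hlen : sSup {s : ℝ | ∃ (k : ℕ) (a : Fin (k + 1) → ℝ), StrictMono a ∧ a 0 = 0 ∧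
        a (Fin.last k) = 1 ∧
        s = ∑ i : Fin k, Real.sqrt ((a i.succ - a i.castSucc) ^ 2 +
          (f (a i.succ) - f (a i.castSucc)) ^ 2)} = 2) :
    ∀ᵐ x ∂(volume.restrict (Icc (0 : ℝ) 1)),
      HasDerivWithinAt f 0 (Icc (0 : ℝ) 1) x := by
  classical
  -- the clamped extension of `f`
  set g : ℝ → ℝ := fun x => f (min 1 (max 0 x)) with hg
  have hclamp_mem : ∀ x : ℝ, min 1 (max 0 x) ∈ Icc (0 : ℝ) 1 := fun x =>
    ⟨le_min zero_le_one (le_max_left 0 x), min_le_left 1 _⟩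
  have hgeq : ∀ x ∈ Icc (0 : ℝ) 1, g x = f x := by
    intro x hx
    simp [hg, max_eq_right hx.1, min_eq_right hx.2]
  have hgmono : Monotone g := by
    intro x y hxy
    exact hm.monotoneOn (hclamp_mem x) (hclamp_mem y)
      (min_le_min le_rfl (max_le_max le_rfl hxy))
  have hgcont : Continuous g := by
    apply hc.comp_continuous
    · exact continuous_const.min (continuous_const.max continuous_id)
    · exact hclamp_mem
  set G : StieltjesFunction ℝ := ⟨g, hgmono, fun x => hgcont.continuousAt.continuousWithinAt⟩
    with hG
  set d : ℝ → ℝ := fun x => (G.measure.rnDeriv volume x).toReal with hd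
  have hd_nonneg : ∀ x, 0 ≤ d x := fun x => ENNReal.toReal_nonneg
  have hd_meas : Measurable d := (Measure.measurable_rnDeriv _ _).ennreal_toReal
  have hae : ∀ᵐ x, HasDerivAt g (d x) x := G.ae_hasDerivAt
  have hGIoc : ∀ u v : ℝ, u ≤ v → (G.measure (Ioc u v)).toReal = g v - g u := by
    intro u v huv
    rw [StieltjesFunction.measure_Ioc]
    exact ENNReal.toReal_ofReal (sub_nonneg.mpr (hgmono huv))
  -- Key step: the set where `d > ε` inside `[0,1]` is null
  have key : ∀ ε : ℝ, 0 < ε → volume (Icc (0:ℝ) 1 ∩ {x | ε < d x}) = 0 := by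
    intro ε hε
    by_contra hne
    set E : Set ℝ := Icc (0:ℝ) 1 ∩ {x | ε < d x} with hE
    have hEmeas : MeasurableSet E :=
      measurableSet_Icc.inter (measurableSet_lt measurable_const hd_meas)
    set m : ℝ := (volume E).toReal with hmdef
    have hEfin : volume E ≠ ⊤ := by
      have h1' : volume E ≤ volume (Icc (0:ℝ) 1) := measure_mono inter_subset_left
      have h2' : volume (Icc (0:ℝ) 1) < ⊤ := measure_Icc_lt_top
      exact (lt_of_le_of_lt h1' h2').ne
    have hm_pos : 0 < m := ENNReal.toReal_pos hne hEfin
    have hm_le : m ≤ 1 := by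
      rw [hmdef]
      have hsub : volume E ≤ volume (Icc (0:ℝ) 1) := measure_mono inter_subset_left
      calc (volume E).toReal ≤ (volume (Icc (0:ℝ) 1)).toReal :=
            ENNReal.toReal_mono (by simp) hsub
        _ = 1 := by simp
    set c : ℝ := min ε 1 * m / 2 with hcdef
    have hc_pos : 0 < c := by
      rw [hcdef]
      have : 0 < min ε 1 := lt_min hε one_pos
      positivity
    have hc_le : c ≤ 1 / 2 := by
      rw [hcdef]
      have : min ε 1 * m ≤ 1 := by
        calc min ε 1 * m ≤ 1 * 1 :=
          mul_le_mul (min_le_right _ _) hm_le hm_pos.le zero_le_one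
        _ = 1 := one_mul 1
      linarith
    -- every inscribed polygonal length is at most 2 - c
    have hub : ∀ s ∈ {s : ℝ | ∃ (k : ℕ) (a : Fin (k + 1) → ℝ), StrictMono a ∧ a 0 = 0 ∧
        a (Fin.last k) = 1 ∧
        s = ∑ i : Fin k, Real.sqrt ((a i.succ - a i.castSucc) ^ 2 +
          (f (a i.succ) - f (a i.castSucc)) ^ 2)}, s ≤ 2 - c := by
      rintro s ⟨k, a, hsm, ha0, halast, rfl⟩
      have hamono : Monotone a := hsm.monotone
      have haIcc : ∀ i : Fin (k+1), a i ∈ Icc (0:ℝ) 1 := by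
        intro i
        constructor
        · rw [← ha0]; exact hamono (Fin.zero_le i)
        · rw [← halast]; exact hamono (Fin.le_last i)
      set w : Fin k → ℝ := fun i => (volume (E ∩ Ioc (a i.castSucc) (a i.succ))).toReal with hw
      have hw_nonneg : ∀ i, 0 ≤ w i := fun i => ENNReal.toReal_nonneg
      have hwfin : ∀ i : Fin k, volume (E ∩ Ioc (a i.castSucc) (a i.succ)) ≠ ⊤ := fun i =>
        (lt_of_le_of_lt (measure_mono inter_subset_left) hEfin.lt_top).ne
      have hterm : ∀ i : Fin k,
          Real.sqrt ((a i.succ - a i.castSucc) ^ 2 + (f (a i.succ) - f (a i.castSucc)) ^ 2)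
            ≤ (a i.succ - a i.castSucc) + (g (a i.succ) - g (a i.castSucc))
              - (min ε 1 * w i) / 2 := by
        intro i
        have hle : a i.castSucc ≤ a i.succ := hamono (Fin.castSucc_le_succ i)
        have hΔx : (0:ℝ) ≤ a i.succ - a i.castSucc := sub_nonneg.mpr hle
        have hΔy : (0:ℝ) ≤ g (a i.succ) - g (a i.castSucc) :=
          sub_nonneg.mpr (hgmono hle)
        have hwx : w i ≤ a i.succ - a i.castSucc := by
          rw [hw]
          calc (volume (E ∩ Ioc (a i.castSucc) (a i.succ))).toReal
              ≤ (volume (Ioc (a i.castSucc) (a i.succ))).toReal :=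
                ENNReal.toReal_mono (by simp) (measure_mono inter_subset_right)
            _ = a i.succ - a i.castSucc := by rw [Real.volume_Ioc,
                ENNReal.toReal_ofReal hΔx]
        have hIfin : G.measure (Ioc (a i.castSucc) (a i.succ)) ≠ ⊤ := by
          rw [StieltjesFunction.measure_Ioc]; exact ENNReal.ofReal_ne_top
        have hint : IntegrableOn d (Ioc (a i.castSucc) (a i.succ)) volume :=
          Measure.integrableOn_toReal_rnDeriv hIfin
        have hwy : ε * w i ≤ g (a i.succ) - g (a i.castSucc) := by
          have h1' : ε * w i ≤ ∫ x in E ∩ Ioc (a i.castSucc) (a i.succ), d x := by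
            rw [mul_comm]
            apply setIntegral_ge_of_const_le
              (hEmeas.inter measurableSet_Ioc) (hwfin i)
            · intro x hx
              exact (hx.1.2 : ε < d x).le
            · exact hint.mono_set inter_subset_right
          have h2' : ∫ x in E ∩ Ioc (a i.castSucc) (a i.succ), d x
              ≤ ∫ x in Ioc (a i.castSucc) (a i.succ), d x := by
            apply setIntegral_mono_set hint
            · exact Eventually.of_forall fun x => hd_nonneg x
            · exact HasSubset.Subset.eventuallyLE inter_subset_right
          have h3' : ∫ x in Ioc (a i.castSucc) (a i.succ), d x
              ≤ g (a i.succ) - g (a i.castSucc) := by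
            rw [← hGIoc _ _ hle]
            exact Measure.setIntegral_toReal_rnDeriv_le hIfin
          linarith
        have hMx : min ε 1 * w i ≤ a i.succ - a i.castSucc := by
          calc min ε 1 * w i ≤ 1 * w i :=
              mul_le_mul_of_nonneg_right (min_le_right _ _) (hw_nonneg i)
            _ = w i := one_mul _
            _ ≤ _ := hwx
        have hMy : min ε 1 * w i ≤ g (a i.succ) - g (a i.castSucc) := by
          calc min ε 1 * w i ≤ ε * w i :=
              mul_le_mul_of_nonneg_right (min_le_left _ _) (hw_nonneg i)
            _ ≤ _ := hwy
        have hM_nonneg : 0 ≤ min ε 1 * w i :=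
          mul_nonneg (le_min hε.le zero_le_one) (hw_nonneg i)
        have hsq := sqrt_deficit hΔx hΔy hM_nonneg hMx hMy
        have hfg1 : f (a i.succ) = g (a i.succ) := (hgeq _ (haIcc _)).symm
        have hfg2 : f (a i.castSucc) = g (a i.castSucc) := (hgeq _ (haIcc _)).symm
        rw [hfg1, hfg2]
        exact hsq
      -- covering estimate: ∑ w i ≥ m
      have hcover : m ≤ ∑ i : Fin k, w i := by
        have hEsub : E ⊆ {0} ∪ ⋃ i : Fin k, (E ∩ Ioc (a i.castSucc) (a i.succ)) := by
          intro x hx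
          rcases eq_or_lt_of_le (hx.1.1 : (0:ℝ) ≤ x) with h | h
          · exact Or.inl (by simp [← h])
          · right
            have hx' : x ∈ Ioc (a 0) (a (Fin.last k)) := by
              rw [ha0, halast]; exact ⟨h, hx.1.2⟩
            obtain ⟨i, hi⟩ := cover_Ioc hamono hx'
            exact mem_iUnion.mpr ⟨i, hx, hi⟩
        have hfin : (∑ i : Fin k, volume (E ∩ Ioc (a i.castSucc) (a i.succ))) ≠ ⊤ :=
          (ENNReal.sum_lt_top.mpr fun i _ => (hwfin i).lt_top).ne
        have h1' : volume E ≤ ∑ i : Fin k, volume (E ∩ Ioc (a i.castSucc) (a i.succ)) := by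
          calc volume E
              ≤ volume ({(0:ℝ)} ∪ ⋃ i : Fin k, (E ∩ Ioc (a i.castSucc) (a i.succ))) :=
              measure_mono hEsub
            _ ≤ volume ({(0:ℝ)} : Set ℝ)
                + volume (⋃ i : Fin k, (E ∩ Ioc (a i.castSucc) (a i.succ))) :=
              measure_union_le _ _
            _ = volume (⋃ i : Fin k, (E ∩ Ioc (a i.castSucc) (a i.succ))) := by simp
            _ ≤ ∑ i : Fin k, volume (E ∩ Ioc (a i.castSucc) (a i.succ)) :=
              measure_iUnion_fintype_le _ _
        calc m ≤ (∑ i : Fin k, volume (E ∩ Ioc (a i.castSucc) (a i.succ))).toReal :=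
            ENNReal.toReal_mono hfin h1'
          _ = ∑ i : Fin k, w i := ENNReal.toReal_sum fun i _ => hwfin i
      -- put it together
      have htelx : ∑ i : Fin k, (a i.succ - a i.castSucc) = 1 := by
        rw [fin_telescope, ha0, halast]; ring
      have htely : ∑ i : Fin k, (g (a i.succ) - g (a i.castSucc)) = 1 := by
        have := fin_telescope (fun i => g (a i))
        rw [this, ha0, halast]
        have e1 : g 1 = 1 := by rw [hgeq 1 ⟨zero_le_one, le_refl 1⟩, h1]
        have e0 : g 0 = 0 := by rw [hgeq 0 ⟨le_refl 0, zero_le_one⟩, h0]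
        rw [e1, e0]; ring
      calc (∑ i : Fin k, Real.sqrt ((a i.succ - a i.castSucc) ^ 2 +
            (f (a i.succ) - f (a i.castSucc)) ^ 2))
          ≤ ∑ i : Fin k, ((a i.succ - a i.castSucc) + (g (a i.succ) - g (a i.castSucc))
              - (min ε 1 * w i) / 2) := Finset.sum_le_sum fun i _ => hterm i
        _ = (∑ i : Fin k, (a i.succ - a i.castSucc))
            + (∑ i : Fin k, (g (a i.succ) - g (a i.castSucc)))
            - (min ε 1 / 2) * ∑ i : Fin k, w i := by
            rw [Finset.mul_sum, ← Finset.sum_add_distrib, ← Finset.sum_sub_distrib]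
            apply Finset.sum_congr rfl
            intro i _
            ring
        _ ≤ 1 + 1 - (min ε 1 / 2) * m := by
            rw [htelx, htely]
            have hmin : 0 ≤ min ε 1 / 2 := by positivity
            have := mul_le_mul_of_nonneg_left hcover hmin
            linarith
        _ = 2 - c := by rw [hcdef]; ring
    have hfinal := Real.sSup_le hub (by linarith : (0:ℝ) ≤ 2 - c)
    rw [hlen] at hfinal
    linarith
  -- conclude
  have hnull : volume (Icc (0:ℝ) 1 ∩ {x | 0 < d x}) = 0 := by
    have hsub : Icc (0:ℝ) 1 ∩ {x | 0 < d x}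
        ⊆ ⋃ n : ℕ, (Icc (0:ℝ) 1 ∩ {x | (1 / ((n:ℝ) + 1)) < d x}) := by
      rintro x ⟨hx1, hx2⟩
      have hx2' : 0 < d x := hx2
      obtain ⟨n, hn⟩ := exists_nat_one_div_lt hx2'
      exact mem_iUnion.mpr ⟨n, hx1, hn⟩
    exact measure_mono_null hsub
      (measure_iUnion_null fun n => key _ (by positivity))
  have hae2 : ∀ᵐ x ∂(volume.restrict (Icc (0:ℝ) 1)), d x ≤ 0 := by
    rw [ae_iff, Measure.restrict_apply (by
      simpa using (measurableSet_lt measurable_const hd_meas : MeasurableSet {x | 0 < d x}))]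
    rw [← hnull]
    congr 1
    ext x
    simp [not_le, and_comm]
  filter_upwards [ae_restrict_of_ae hae, hae2, ae_restrict_mem measurableSet_Icc]
    with x hx1 hx2 hx3
  have hdx : d x = 0 := le_antisymm hx2 (hd_nonneg x)
  rw [hdx] at hx1
  exact (hx1.hasDerivWithinAt).congr (fun y hy => (hgeq y hy).symm) (hgeq x hx3).symm
end

section
/- For every d ≥ 1, the generic continuous map f ∈ C([0,1]^d, ℝ^d) (in the sense of Baire category, with the uniform metric) satisfies: there is an F_σ set F ⊆ [0,1]^d with λ^d(F) = 1 such that λ^d(f(F)) = 0. That is, the set of f admitting such an F is comeager. -/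
open MeasureTheory Metric Set Filter Topology

/-- The unit cube `[0,1]^d` in Euclidean space. -/
def cube (d : ℕ) : Set (EuclideanSpace ℝ (Fin d)) := {x | ∀ i, x i ∈ Icc (0 : ℝ) 1}

noncomputable def qseq : ℕ → ℝ := TopologicalSpace.denseSeq ℝ

noncomputable def USet (δ : ℝ) : Set ℝ := ⋃ i, Metric.ball (qseq i) (δ/4 * (2⁻¹:ℝ)^i)

noncomputable def CSet (δ : ℝ) : Set ℝ := Icc 0 1 \ USet δ

lemma isOpen_USet (δ : ℝ) : IsOpen (USet δ) := isOpen_iUnion fun _ => isOpen_ball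

lemma isClosed_CSet (δ : ℝ) : IsClosed (CSet δ) := isClosed_Icc.sdiff (isOpen_USet δ)

lemma CSet_subset (δ : ℝ) : CSet δ ⊆ Icc 0 1 := diff_subset

lemma qseq_mem_USet {δ : ℝ} (hδ : 0 < δ) (i : ℕ) : qseq i ∈ USet δ :=
  mem_iUnion.2 ⟨i, mem_ball_self (by positivity)⟩

lemma volume_USet {δ : ℝ} (hδ : 0 ≤ δ) : volume (USet δ) ≤ ENNReal.ofReal δ := by
  refine (measure_iUnion_le _).trans ?_
  have h1 : ∀ i : ℕ, volume (Metric.ball (qseq i) (δ/4 * (2⁻¹:ℝ)^i))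
      = ENNReal.ofReal (δ/2 * (2⁻¹:ℝ)^i) := by
    intro i
    rw [Real.volume_ball]
    congr 1
    ring
  simp_rw [h1]
  have hnn : ∀ i : ℕ, 0 ≤ δ/2 * (2⁻¹:ℝ)^i := fun i => by positivity
  have hsumm : Summable (fun i : ℕ => δ/2 * (2⁻¹:ℝ)^i) :=
    (summable_geometric_of_lt_one (by norm_num) (by norm_num)).mul_left _
  rw [← ENNReal.ofReal_tsum_of_nonneg hnn hsumm]
  apply ENNReal.ofReal_le_ofReal
  rw [tsum_mul_left, tsum_geometric_of_lt_one (by norm_num) (by norm_num)]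
  norm_num

lemma me_apply (d : ℕ) (x : EuclideanSpace ℝ (Fin d)) (i : Fin d) :
    ((MeasurableEquiv.toLp 2 (Fin d → ℝ)).symm) x i = x i := rfl

lemma isClosed_cube (d : ℕ) : IsClosed (cube d) := by
  have h : cube d = ⋂ i, (fun x : EuclideanSpace ℝ (Fin d) => x i) ⁻¹' Icc (0:ℝ) 1 := by
    ext x; simp [cube]
  rw [h]
  exact isClosed_iInter fun i => isClosed_Icc.preimage (by fun_prop)

lemma isCompact_cube (d : ℕ) : IsCompact (cube d) := by
  refine Metric.isCompact_of_isClosed_isBounded (isClosed_cube d) ?_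
  refine (Metric.isBounded_closedBall (x := (0:EuclideanSpace ℝ (Fin d))) (r := d+1)).subset ?_
  intro x hx
  rw [Metric.mem_closedBall, dist_zero_right, EuclideanSpace.norm_eq]
  have h1 : (∑ i, ‖x i‖^2) ≤ ((d:ℝ)+1)^2 := by
    calc (∑ i, ‖x i‖^2) ≤ ∑ _i : Fin d, (1:ℝ) := by
          refine Finset.sum_le_sum fun i _ => ?_
          have := (hx i).1; have := (hx i).2
          rw [Real.norm_eq_abs, sq_abs]
          nlinarith
      _ = d := by simp
      _ ≤ ((d:ℝ)+1)^2 := by nlinarith [Nat.cast_nonneg (α := ℝ) d]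
  calc Real.sqrt (∑ i, ‖x i‖^2) ≤ Real.sqrt (((d:ℝ)+1)^2) := Real.sqrt_le_sqrt h1
    _ = (d:ℝ)+1 := Real.sqrt_sq (by positivity)

instance cubeCompact (d : ℕ) : CompactSpace ↥(cube d) :=
  isCompact_iff_compactSpace.mp (isCompact_cube d)

lemma volume_singleton_eq_zero (d : ℕ) (hd : 1 ≤ d) (y : EuclideanSpace ℝ (Fin d)) :
    volume ({y} : Set (EuclideanSpace ℝ (Fin d))) = 0 := by
  have h : ({y} : Set (EuclideanSpace ℝ (Fin d)))
      = ((MeasurableEquiv.toLp 2 (Fin d → ℝ)).symm) ⁻¹' (univ.pi fun i => {y i}) := by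
    ext x
    simp only [mem_singleton_iff, mem_preimage, Set.mem_univ_pi, me_apply]
    constructor
    · rintro rfl; intro i; rfl
    · intro h; ext i; exact h i
  rw [h, (EuclideanSpace.volume_preserving_symm_measurableEquiv_toLp (Fin d)).measure_preimage
      (MeasurableSet.univ_pi fun _ => measurableSet_singleton _).nullMeasurableSet,
    volume_pi_pi]
  simp only [Real.volume_singleton]
  rw [Finset.prod_const]
  rw [Finset.card_univ, Fintype.card_fin]
  exact zero_pow (by omega)

noncomputable def Kamb (d : ℕ) (δ : ℝ) : Set (EuclideanSpace ℝ (Fin d)) :=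
  {x | ∀ i, x i ∈ CSet δ}

lemma Kamb_subset_cube (d : ℕ) (δ : ℝ) : Kamb d δ ⊆ cube d :=
  fun x hx i => (hx i).1

lemma cube_eq_preimage (d : ℕ) :
    cube d = ((MeasurableEquiv.toLp 2 (Fin d → ℝ)).symm) ⁻¹' (univ.pi fun _ => Icc (0:ℝ) 1) := by
  ext x
  simp only [cube, mem_setOf_eq, mem_preimage, Set.mem_univ_pi, me_apply]

lemma volume_cube (d : ℕ) : volume (cube d) = 1 := by
  rw [cube_eq_preimage,
    (EuclideanSpace.volume_preserving_symm_measurableEquiv_toLp (Fin d)).measure_preimage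
      (MeasurableSet.univ_pi fun _ => measurableSet_Icc).nullMeasurableSet,
    volume_pi_pi]
  simp

lemma volume_cube_diff_Kamb (d : ℕ) {δ : ℝ} (hδ : 0 ≤ δ) :
    volume (cube d \ Kamb d δ) ≤ d * ENNReal.ofReal δ := by
  classical
  set e := (MeasurableEquiv.toLp 2 (Fin d → ℝ)).symm
  have hsub : cube d \ Kamb d δ ⊆
      ⋃ j : Fin d, e ⁻¹' (univ.pi fun i => if i = j then Icc (0:ℝ) 1 ∩ USet δ else Icc 0 1) := by
    rintro x ⟨hx, hnx⟩
    simp only [Kamb, mem_setOf_eq, not_forall] at hnx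
    obtain ⟨j, hj⟩ := hnx
    refine mem_iUnion.2 ⟨j, ?_⟩
    simp only [mem_preimage, Set.mem_univ_pi, me_apply]
    intro i
    by_cases h : i = j
    · subst h
      simp only [if_pos rfl]
      refine ⟨hx i, ?_⟩
      by_contra hU
      exact hj ⟨hx i, hU⟩
    · rw [if_neg h]; exact hx i
  refine (measure_mono hsub).trans ?_
  refine (measure_iUnion_le _).trans ?_
  have hval : ∀ j : Fin d,
      volume (e ⁻¹' (univ.pi fun i => if i = j then Icc (0:ℝ) 1 ∩ USet δ else Icc 0 1))
        ≤ ENNReal.ofReal δ := by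
    intro j
    rw [(EuclideanSpace.volume_preserving_symm_measurableEquiv_toLp (Fin d)).measure_preimage
      (MeasurableSet.univ_pi fun i => by
        by_cases h : i = j <;>
          simp [h, measurableSet_Icc, measurableSet_Icc.inter (isOpen_iUnion fun _ => isOpen_ball).measurableSet,
            USet]).nullMeasurableSet, volume_pi_pi]
    calc ∏ i : Fin d, volume (if i = j then Icc (0:ℝ) 1 ∩ USet δ else Icc 0 1)
        ≤ ∏ i : Fin d, (if i = j then ENNReal.ofReal δ else 1) := by
          refine Finset.prod_le_prod' fun i _ => ?_
          by_cases h : i = j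
          · simp only [h, if_pos rfl]
            exact (measure_mono inter_subset_right).trans (volume_USet hδ)
          · simp [h]
      _ = ENNReal.ofReal δ := by
          rw [Finset.prod_ite_eq' Finset.univ j (fun _ => ENNReal.ofReal δ)]
          simp
  calc (∑' j : Fin d, volume (e ⁻¹' _)) ≤ ∑' _j : Fin d, ENNReal.ofReal δ :=
        ENNReal.tsum_le_tsum hval
    _ = d * ENNReal.ofReal δ := by simp [tsum_fintype, mul_comm]

lemma volume_iUnion_Kamb (d : ℕ) :
    volume (⋃ k : ℕ, Kamb d ((k+1:ℝ))⁻¹) = 1 := by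
  set A := ⋃ k : ℕ, Kamb d ((k+1:ℝ))⁻¹ with hA
  have hAk : ∀ k : ℕ, Kamb d ((k+1:ℝ))⁻¹ ⊆ A := fun k => by rw [hA]; exact subset_iUnion (fun k : ℕ => Kamb d ((k+1:ℝ))⁻¹) k
  have hAc : A ⊆ cube d := iUnion_subset fun k => Kamb_subset_cube d _
  have hzero : volume (cube d \ A) = 0 := by
    have hle : ∀ k : ℕ, volume (cube d \ A) ≤ d * ENNReal.ofReal ((k+1:ℝ))⁻¹ := by
      intro k
      refine (measure_mono (diff_subset_diff_right (hAk k))).trans ?_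
      exact volume_cube_diff_Kamb d (by positivity)
    have htend : Tendsto (fun k : ℕ => (d:ENNReal) * ENNReal.ofReal ((k+1:ℝ))⁻¹) atTop (nhds 0) := by
      have h1 : Tendsto (fun k : ℕ => ((k+1:ℝ))⁻¹) atTop (nhds 0) := by
        simpa using tendsto_one_div_add_atTop_nhds_zero_nat (𝕜 := ℝ)
      have h2 : Tendsto (fun k : ℕ => ENNReal.ofReal ((k+1:ℝ))⁻¹) atTop (nhds 0) := by
        simpa [Function.comp_def] using (ENNReal.continuous_ofReal.tendsto 0).comp h1
      simpa using ENNReal.Tendsto.const_mul h2 (Or.inr (by simp))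
    exact le_antisymm (ge_of_tendsto' htend hle) (zero_le)
  have h1 : volume A ≤ 1 := by
    rw [← volume_cube d]; exact measure_mono hAc
  have h2 : (1:ENNReal) ≤ volume A := by
    calc (1:ENNReal) = volume (cube d) := (volume_cube d).symm
      _ ≤ volume (A ∪ (cube d \ A)) := measure_mono (by intro x hx; by_cases h : x ∈ A <;> simp [h, hx])
      _ ≤ volume A + volume (cube d \ A) := measure_union_le _ _
      _ = volume A := by rw [hzero, add_zero]
  exact le_antisymm h1 h2

lemma isClosed_Kamb (d : ℕ) (δ : ℝ) : IsClosed (Kamb d δ) := by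
  have h : Kamb d δ = ⋂ i, (fun x : EuclideanSpace ℝ (Fin d) => x i) ⁻¹' CSet δ := by
    ext x; simp [Kamb]
  rw [h]
  exact isClosed_iInter fun i => (isClosed_CSet δ).preimage (by fun_prop)

lemma isOpen_small_image (d : ℕ) (K : Set ↥(cube d)) (hK : IsCompact K) (a : ENNReal) :
    IsOpen {f : C(↥(cube d), EuclideanSpace ℝ (Fin d)) | volume (f '' K) < a} := by
  rw [Metric.isOpen_iff]
  intro f hf
  have hcomp : IsCompact (f '' K) := hK.image (map_continuous f)
  obtain ⟨U, hUsup, hUopen, hUvol⟩ := Set.exists_isOpen_lt_of_lt (f '' K) a hf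
  obtain ⟨ε, hε, hthick⟩ := hcomp.exists_thickening_subset_open hUopen hUsup
  refine ⟨ε, hε, fun g hg => ?_⟩
  have hsub : g '' K ⊆ Metric.thickening ε (f '' K) := by
    rintro _ ⟨x, hx, rfl⟩
    rw [Metric.mem_thickening_iff]
    refine ⟨f x, mem_image_of_mem _ hx, ?_⟩
    calc dist (g x) (f x) ≤ dist g f := ContinuousMap.dist_apply_le_dist x
      _ < ε := mem_ball.1 hg
  exact lt_of_le_of_lt (measure_mono (hsub.trans hthick)) hUvol

instance cubeNonempty (d : ℕ) : Nonempty ↥(cube d) :=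
  ⟨⟨(0 : EuclideanSpace ℝ (Fin d)), fun _ => by constructor <;> norm_num⟩⟩

lemma dense_small_image (d : ℕ) (hd : 1 ≤ d) {δ : ℝ} (hδ : 0 < δ)
    (g : C(↥(cube d), EuclideanSpace ℝ (Fin d))) {ε : ℝ} (hε : 0 < ε) :
    ∃ f : C(↥(cube d), EuclideanSpace ℝ (Fin d)),
      dist f g < ε ∧ volume (f '' ((↑) ⁻¹' (Kamb d δ) : Set ↥(cube d))) = 0 := by
  classical
  set X := ↥(cube d)
  set E := EuclideanSpace ℝ (Fin d)
  set Ksub : Set X := (↑) ⁻¹' (Kamb d δ) with hKsub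
  -- uniform continuity
  have hg : UniformContinuous g := CompactSpace.uniformContinuous_of_continuous (map_continuous g)
  obtain ⟨δ'', hδ''pos, hδ''⟩ := Metric.uniformContinuous_iff.1 hg (ε/2) (by positivity)
  set δ' : ℝ := min (δ''/(2*((d:ℝ)+1))) 1 with hδ'def
  have hδ'pos : 0 < δ' := lt_min (by positivity) one_pos
  have hδ'le1 : δ' ≤ 1 := min_le_right _ _
  have hδ'ub : δ' ≤ δ''/(2*((d:ℝ)+1)) := min_le_left _ _
  set N : ℕ := ⌈2/δ'⌉₊ with hNdef
  have hNge : 2 ≤ (N:ℝ) * δ' := by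
    have h1 : 2/δ' ≤ (N:ℝ) := Nat.le_ceil _
    calc (2:ℝ) = (2/δ') * δ' := by field_simp
      _ ≤ (N:ℝ) * δ' := by nlinarith
  -- choose the gap points u
  have hsel : ∀ j : ℕ, ∃ i : ℕ, qseq i ∈ Ioo ((j:ℝ)*δ' - 1) ((j:ℝ)*δ' - 1 + δ'/2) := by
    intro j
    exact (TopologicalSpace.denseRange_denseSeq ℝ).exists_mem_open isOpen_Ioo
      (nonempty_Ioo.2 (by linarith))
  choose isel huIoo using hsel
  set u : ℕ → ℝ := fun j => qseq (isel j) with hudef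
  have huU : ∀ j, u j ∈ USet δ := fun j => qseq_mem_USet hδ _
  have humono : StrictMono u := by
    apply strictMono_nat_of_lt_succ
    intro j
    have h1 := (huIoo j).2
    have h2 := (huIoo (j+1)).1
    push_cast at h2
    simp only [hudef]
    linarith
  have hgap : ∀ j, u (j+1) - u j ≤ 2*δ' := by
    intro j
    have h1 := (huIoo j).1
    have h2 := (huIoo (j+1)).2
    push_cast at h2
    simp only [hudef] at *
    linarith
  have hu0 : u 0 < 0 := by
    have := (huIoo 0).2
    simp only [hudef] at *
    push_cast at this
    linarith
  have huN : 1 < u N := by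
    have := (huIoo N).1
    simp only [hudef] at *
    linarith
  -- covering lemma in 1 dimension
  have hcov1 : ∀ c : ℝ, c ∈ CSet δ → ∃ j : ℕ, j < N ∧ c ∈ Ioo (u j) (u (j+1)) := by
    intro c hc
    have hc01 : c ∈ Icc (0:ℝ) 1 := hc.1
    have hcU : c ∉ USet δ := hc.2
    set S := (Finset.range (N+1)).filter (fun j => u j < c) with hSdef
    have h0S : (0:ℕ) ∈ S :=
      Finset.mem_filter.2 ⟨Finset.mem_range.2 (by omega), lt_of_lt_of_le hu0 hc01.1⟩
    have hSne : S.Nonempty := ⟨0, h0S⟩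
    set j := S.max' hSne with hjdef
    have hjS : j ∈ S := S.max'_mem hSne
    have hjr : j < N + 1 := Finset.mem_range.1 (Finset.mem_filter.1 hjS).1
    have hj1 : u j < c := (Finset.mem_filter.1 hjS).2
    have hjN : j < N := by
      rcases Nat.lt_or_ge j N with h | h
      · exact h
      · exfalso
        have hjeq : j = N := by omega
        rw [hjeq] at hj1
        linarith [hc01.2]
    have hnot : ¬ (u (j+1) < c) := by
      intro h
      have hmem : j+1 ∈ S := Finset.mem_filter.2 ⟨Finset.mem_range.2 (by omega), h⟩
      have := S.le_max' _ hmem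
      omega
    have hle : c ≤ u (j+1) := not_lt.1 hnot
    have hne : c ≠ u (j+1) := fun h => hcU (h ▸ huU (j+1))
    exact ⟨j, hjN, hj1, lt_of_le_of_ne hle hne⟩
  -- boxes and pieces
  set Box : (Fin d → Fin N) → Set X :=
    fun σ => {x | ∀ i, (x : E) i ∈ Ioo (u (σ i)) (u ((σ i : ℕ)+1))} with hBoxdef
  set P : (Fin d → Fin N) → Set X :=
    fun σ => Ksub ∩ {x | ∀ i, (x : E) i ∈ Icc (u (σ i)) (u ((σ i : ℕ)+1))} with hPdef
  have hcont_coord : ∀ i : Fin d, Continuous (fun x : X => (x : E) i) :=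
    fun i => (PiLp.continuous_apply 2 (fun _ : Fin d => ℝ) i).comp continuous_subtype_val
  have hBoxOpen : ∀ σ, IsOpen (Box σ) := by
    intro σ
    have : Box σ = ⋂ i, (fun x : X => (x : E) i) ⁻¹' Ioo (u (σ i)) (u ((σ i : ℕ)+1)) := by
      ext x; simp [hBoxdef]
    rw [this]
    exact isOpen_iInter_of_finite fun i => isOpen_Ioo.preimage (hcont_coord i)
  have hKclosed : IsClosed Ksub := (isClosed_Kamb d δ).preimage continuous_subtype_val
  have hPclosed : ∀ σ, IsClosed (P σ) := by
    intro σ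
    apply hKclosed.inter
    have : {x : X | ∀ i, (x : E) i ∈ Icc (u (σ i)) (u ((σ i : ℕ)+1))}
        = ⋂ i, (fun x : X => (x : E) i) ⁻¹' Icc (u (σ i)) (u ((σ i : ℕ)+1)) := by
      ext x; simp
    rw [this]
    exact isClosed_iInter fun i => isClosed_Icc.preimage (hcont_coord i)
  have hxCoord : ∀ x : X, x ∈ Ksub → ∀ i, (x : E) i ∈ CSet δ := by
    intro x hx i; exact hx i
  have hPsubBox : ∀ σ, P σ ⊆ Box σ := by
    rintro σ x ⟨hxK, hxI⟩ i
    have hC := hxCoord x hxK i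
    have hI := hxI i
    constructor
    · rcases lt_or_eq_of_le hI.1 with h | h
      · exact h
      · exact absurd (h ▸ huU (σ i)) hC.2
    · rcases lt_or_eq_of_le hI.2 with h | h
      · exact h
      · exact absurd (h ▸ huU ((σ i : ℕ)+1)) hC.2
  have hBoxDisj : ∀ σ τ, σ ≠ τ → ∀ x, x ∈ Box σ → x ∈ Box τ → False := by
    have key : ∀ σ τ : Fin d → Fin N, ∀ i : Fin d, ((σ i : ℕ) < (τ i : ℕ)) →
        ∀ x, x ∈ Box σ → x ∈ Box τ → False := by
      intro σ τ i hlt x hxσ hxτ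
      have h1 := (hxσ i).2
      have h2 := (hxτ i).1
      have h3 : u ((σ i : ℕ)+1) ≤ u (τ i : ℕ) := humono.monotone (by omega)
      linarith
    intro σ τ hne x hxσ hxτ
    obtain ⟨i, hi⟩ := Function.ne_iff.1 hne
    rcases lt_trichotomy ((σ i : ℕ)) ((τ i : ℕ)) with h | h | h
    · exact key σ τ i h x hxσ hxτ
    · exact hi (Fin.ext h)
    · exact key τ σ i h x hxτ hxσ
  have hcover : ∀ x ∈ Ksub, ∃ σ : Fin d → Fin N, x ∈ P σ ∧ x ∈ Box σ := by
    intro x hx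
    have h := fun i => hcov1 ((x:E) i) (hxCoord x hx i)
    choose jf hjlt hjmem using h
    refine ⟨fun i => ⟨jf i, hjlt i⟩, ⟨hx, fun i => ?_⟩, fun i => hjmem i⟩
    exact Ioo_subset_Icc_self (hjmem i)
  -- the finite index set and reference points
  set J : Finset (Fin d → Fin N) := Finset.univ.filter (fun σ => (P σ).Nonempty) with hJdef
  have hz : ∀ σ ∈ J, ∃ z : X, z ∈ P σ := fun σ hσ => (Finset.mem_filter.1 hσ).2
  choose! z hzmem using hz
  -- oscillation bound
  have hosc : ∀ σ ∈ J, ∀ x ∈ P σ, dist (g x) (g (z σ)) < ε/2 := by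
    intro σ hσ x hx
    apply hδ''
    have hzP := hzmem σ hσ
    rw [Subtype.dist_eq, EuclideanSpace.dist_eq, Real.sqrt_lt' hδ''pos]
    have hterm : ∀ i : Fin d, dist ((x:E) i) ((z σ : E) i)^2 ≤ (2*δ')^2 := by
      intro i
      have h1 := (hx.2 i)
      have h2 := (hzP.2 i)
      have hgapi := hgap (σ i : ℕ)
      rw [Real.dist_eq]
      have habs : |(x:E) i - (z σ : E) i| ≤ 2*δ' := by
        rw [abs_le]
        exact ⟨by linarith [h1.1, h1.2, h2.1, h2.2], by linarith [h1.1, h1.2, h2.1, h2.2]⟩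
      nlinarith [abs_nonneg ((x:E) i - (z σ : E) i)]
    calc (∑ i, dist ((x:E) i) ((z σ : E) i)^2) ≤ ∑ _i : Fin d, (2*δ')^2 :=
          Finset.sum_le_sum fun i _ => hterm i
      _ = (d:ℝ) * (2*δ')^2 := by rw [Finset.sum_const]; simp [mul_comm]
      _ < δ''^2 := by
          have h2 : (0:ℝ) ≤ (d:ℝ) := Nat.cast_nonneg d
          have h1 : 2*δ'*((d:ℝ)+1) ≤ δ'' := by
            rw [le_div_iff₀ (by positivity)] at hδ'ub
            linarith
          nlinarith [mul_self_le_mul_self (by positivity : (0:ℝ) ≤ 2*δ'*((d:ℝ)+1)) h1,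
            mul_pos (mul_pos two_pos hδ'pos) (mul_pos two_pos hδ'pos)]
  -- the open neighborhoods
  set V : (Fin d → Fin N) → Set X :=
    fun σ => Box σ ∩ (⇑g ⁻¹' Metric.ball (g (z σ)) (ε/2)) with hVdef
  have hVopen : ∀ σ, IsOpen (V σ) :=
    fun σ => (hBoxOpen σ).inter (isOpen_ball.preimage (map_continuous g))
  have hPV : ∀ σ ∈ J, P σ ⊆ V σ := by
    intro σ hσ x hx
    exact ⟨hPsubBox σ hx, by simpa [Metric.mem_ball] using hosc σ hσ x hx⟩
  -- Urysohn functions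
  have hUry : ∀ σ ∈ J, ∃ φ : C(X, ℝ),
      EqOn ⇑φ 0 ((V σ)ᶜ) ∧ EqOn ⇑φ 1 (P σ) ∧ ∀ x, φ x ∈ Icc (0:ℝ) 1 := by
    intro σ hσ
    exact exists_continuous_zero_one_of_isClosed (hVopen σ).isClosed_compl (hPclosed σ)
      (Set.disjoint_left.2 fun x hxc hxP => hxc (hPV σ hσ hxP))
  choose! φ hφ0 hφ1 hφmem using hUry
  -- the perturbed map
  set f : C(X, E) := ⟨fun x => g x + ∑ σ ∈ J, φ σ x • (g (z σ) - g x),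
    (map_continuous g).add (continuous_finset_sum J fun σ _ =>
      ((map_continuous (φ σ)).smul (continuous_const.sub (map_continuous g))))⟩ with hfdef
  have hfx : ∀ x : X, f x = g x + ∑ σ ∈ J, φ σ x • (g (z σ) - g x) := fun x => rfl
  refine ⟨f, ?_, ?_⟩
  · -- distance bound
    have hdle : dist f g ≤ ε/2 := by
      rw [ContinuousMap.dist_le (by positivity)]
      intro x
      rw [dist_eq_norm, hfx x, add_sub_cancel_left]
      by_cases hex : ∃ σ ∈ J, x ∈ V σ
      · obtain ⟨σ0, hσ0, hxV⟩ := hex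
        rw [Finset.sum_eq_single_of_mem σ0 hσ0 ?_]
        · rw [norm_smul]
          have hb1 : ‖φ σ0 x‖ ≤ 1 := by
            have := hφmem σ0 hσ0 x
            rw [Real.norm_eq_abs, abs_le]
            constructor <;> linarith [this.1, this.2]
          have hb2 : ‖g (z σ0) - g x‖ ≤ ε/2 := by
            have : dist (g x) (g (z σ0)) < ε/2 := by simpa [Metric.mem_ball] using hxV.2
            rw [← dist_eq_norm, dist_comm]
            linarith
          calc ‖φ σ0 x‖ * ‖g (z σ0) - g x‖ ≤ 1 * (ε/2) :=
                mul_le_mul hb1 hb2 (norm_nonneg _) zero_le_one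
            _ = ε/2 := one_mul _
        · intro σ hσ hne
          have hx0 : x ∉ V σ := by
            intro hxVσ
            exact hBoxDisj σ σ0 hne x hxVσ.1 hxV.1
          rw [hφ0 σ hσ hx0]
          simp
      · push_neg at hex
        rw [Finset.sum_eq_zero]
        · simp; positivity
        · intro σ hσ
          rw [hφ0 σ hσ (hex σ hσ)]
          simp
    linarith [hdle]
  · -- null image
    haveI : NullSingletonClass (volume : Measure E) := ⟨volume_singleton_eq_zero d hd⟩
    have himg : f '' Ksub ⊆ (fun σ => g (z σ)) '' (J : Set (Fin d → Fin N)) := by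
      rintro _ ⟨x, hx, rfl⟩
      obtain ⟨σ0, hσ0P, hσ0B⟩ := hcover x hx
      have hσ0J : σ0 ∈ J := Finset.mem_filter.2 ⟨Finset.mem_univ _, ⟨x, hσ0P⟩⟩
      refine ⟨σ0, by simpa using hσ0J, ?_⟩
      rw [hfx x, Finset.sum_eq_single_of_mem σ0 hσ0J ?_]
      · have h1 : φ σ0 x = 1 := hφ1 σ0 hσ0J hσ0P
        rw [h1]
        simp
      · intro σ hσ hne
        have hx0 : x ∉ V σ := fun hxVσ => hBoxDisj σ σ0 hne x hxVσ.1 hσ0B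
        rw [hφ0 σ hσ hx0]
        simp
    refine le_antisymm ?_ (zero_le)
    calc volume (f '' Ksub) ≤ volume ((fun σ => g (z σ)) '' (J : Set (Fin d → Fin N))) :=
          measure_mono himg
      _ = 0 := ((J : Set (Fin d → Fin N)).toFinite.image _).measure_zero volume

/-- For every `d ≥ 1`, the generic continuous map `f : [0,1]^d → ℝ^d` admits an
`F_σ` set `F ⊆ [0,1]^d` of full Lebesgue measure whose image under `f` is
Lebesgue null; that is, the set of such `f` is comeager. -/
theorem stmt8 (d : ℕ) (hd : 1 ≤ d) :
    {f : C(↥(cube d), EuclideanSpace ℝ (Fin d)) |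
      ∃ F : ℕ → Set ↥(cube d), (∀ n, IsClosed (F n)) ∧
        volume ((↑) '' (⋃ n, F n) : Set (EuclideanSpace ℝ (Fin d))) = 1 ∧
        volume (f '' (⋃ n, F n)) = 0} ∈
      residual C(↥(cube d), EuclideanSpace ℝ (Fin d)) := by
  classical
  set X := ↥(cube d)
  set E := EuclideanSpace ℝ (Fin d)
  set Ksub : ℕ → Set X := fun k => (↑) ⁻¹' (Kamb d ((k+1:ℝ))⁻¹) with hKsubdef
  have hKclosed : ∀ k, IsClosed (Ksub k) :=
    fun k => (isClosed_Kamb d _).preimage continuous_subtype_val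
  set O : ℕ → ℕ → Set C(X, E) :=
    fun k n => {f | volume (f '' Ksub k) < ((n:ENNReal)+1)⁻¹} with hOdef
  have hOopen : ∀ k n, IsOpen (O k n) :=
    fun k n => isOpen_small_image d (Ksub k) (hKclosed k).isCompact _
  have hOdense : ∀ k n, Dense (O k n) := by
    intro k n
    rw [Metric.dense_iff]
    intro g r hr
    obtain ⟨f, hfd, hf0⟩ := dense_small_image d hd
      (δ := ((k:ℝ)+1)⁻¹) (by positivity) g hr
    refine ⟨f, Metric.mem_ball.2 hfd, ?_⟩
    show volume (f '' Ksub k) < ((n:ENNReal)+1)⁻¹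
    have h0 : volume (f '' Ksub k) = 0 := by
      convert hf0 using 3
    rw [h0]
    exact ENNReal.inv_pos.2 (by simp)
  have hres : (⋂ k, ⋂ n, O k n) ∈ residual C(X, E) :=
    countable_iInter_mem.2 fun k => countable_iInter_mem.2 fun n =>
      residual_of_dense_open (hOopen k n) (hOdense k n)
  refine Filter.mem_of_superset hres ?_
  intro f hf
  simp only [mem_iInter] at hf
  refine ⟨Ksub, hKclosed, ?_, ?_⟩
  · have himg : (↑) '' (⋃ k, Ksub k) = ⋃ k : ℕ, Kamb d ((k+1:ℝ))⁻¹ := by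
      rw [image_iUnion]
      refine iUnion_congr fun k => ?_
      rw [hKsubdef]
      rw [Subtype.image_preimage_coe]
      exact inter_eq_self_of_subset_right (Kamb_subset_cube d _)
    rw [himg, volume_iUnion_Kamb]
  · have hk : ∀ k, volume (f '' Ksub k) = 0 := by
      intro k
      by_contra h
      obtain ⟨n, hn⟩ := ENNReal.exists_inv_nat_lt h
      have h1 : volume (f '' Ksub k) < ((n:ENNReal)+1)⁻¹ := hf k n
      have h2 : ((n:ENNReal)+1)⁻¹ ≤ (n:ENNReal)⁻¹ := ENNReal.inv_le_inv.2 le_self_add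
      exact absurd (hn.trans (h1.trans_le h2)) (lt_irrefl _)
    rw [image_iUnion]
    refine le_antisymm ((measure_iUnion_le _).trans ?_) (zero_le)
    simp [hk]
end

section
/- Let (K, ρ) be a compact perfect metric space and d ≥ 1. Then the generic continuous map f ∈ C(K, ℝ^d) satisfies: for every x ∈ K, limsup_{y→x} |f(x) - f(y)| / ρ(x,y) = ∞. In particular, the set of such f is comeager in C(K, ℝ^d). -/
open MeasureTheory Metric Set Filter Topology NNReal

section Aux

variable {K' : Type*} [MetricSpace K'] [CompactSpace K']

/-- Lipschitz functions are dense in `C(K', ℝ)` for compact `K`. -/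
theorem exists_lip_near (f : C(K', ℝ)) {ε : ℝ} (hε : 0 < ε) :
    ∃ h : C(K', ℝ), (∃ L : ℝ≥0, LipschitzWith L h) ∧ ‖h - f‖ < ε := by
  let A : Subalgebra ℝ C(K', ℝ) :=
    { carrier := {g : C(K', ℝ) | ∃ L : ℝ≥0, LipschitzWith L g}
      mul_mem' := by
        rintro a b ⟨La, ha⟩ ⟨Lb, hb⟩
        refine ⟨‖a‖₊ * Lb + ‖b‖₊ * La, LipschitzWith.of_dist_le_mul fun x y => ?_⟩
        have h1 : dist (a x) (a y) ≤ (La : ℝ) * dist x y := ha.dist_le_mul x y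
        have h2 : dist (b x) (b y) ≤ (Lb : ℝ) * dist x y := hb.dist_le_mul x y
        have h3 : ‖a x‖ ≤ ‖a‖ := a.norm_coe_le_norm x
        have h4 : ‖b y‖ ≤ ‖b‖ := b.norm_coe_le_norm y
        have key : |a x * b x - a y * b y| ≤ |a x| * |b x - b y| + |b y| * |a x - a y| := by
          have e : a x * b x - a y * b y = a x * (b x - b y) + b y * (a x - a y) := by ring
          rw [e]
          exact (abs_add_le _ _).trans (by rw [abs_mul, abs_mul])
        have t1 : |a x| * |b x - b y| ≤ ‖a‖ * ((Lb : ℝ) * dist x y) := by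
          apply mul_le_mul h3 _ (abs_nonneg _) (norm_nonneg _)
          simpa [Real.dist_eq] using h2
        have t2 : |b y| * |a x - a y| ≤ ‖b‖ * ((La : ℝ) * dist x y) := by
          apply mul_le_mul h4 _ (abs_nonneg _) (norm_nonneg _)
          simpa [Real.dist_eq] using h1
        have : ((‖a‖₊ * Lb + ‖b‖₊ * La : ℝ≥0) : ℝ) = ‖a‖ * Lb + ‖b‖ * La := by
          push_cast; rfl
        rw [ContinuousMap.mul_apply, ContinuousMap.mul_apply, Real.dist_eq, this]
        nlinarith [key, t1, t2]
      one_mem' := ⟨0, by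
        have : (⇑(1 : C(K', ℝ))) = fun _ => (1 : ℝ) := rfl
        rw [this]; exact LipschitzWith.const' 1⟩
      add_mem' := by
        rintro a b ⟨La, ha⟩ ⟨Lb, hb⟩
        exact ⟨La + Lb, by rw [ContinuousMap.coe_add]; exact ha.add hb⟩
      zero_mem' := ⟨0, by
        have : (⇑(0 : C(K', ℝ))) = fun _ => (0 : ℝ) := rfl
        rw [this]; exact LipschitzWith.const' 0⟩
      algebraMap_mem' := fun r => ⟨0, by
        have : (⇑(algebraMap ℝ C(K', ℝ) r)) = fun _ => r := rfl
        rw [this]; exact LipschitzWith.const' r⟩ }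
  have sep : A.SeparatesPoints := by
    intro x y hxy
    refine ⟨_, ⟨(⟨fun z => dist z y, continuous_id.dist continuous_const⟩ : C(K', ℝ)),
      ⟨1, LipschitzWith.of_dist_le_mul fun u v => by
        simpa [Real.dist_eq] using abs_dist_sub_le u v y⟩, rfl⟩, ?_⟩
    simpa using dist_ne_zero.2 hxy
  obtain ⟨⟨g, hgA⟩, hg⟩ :=
    ContinuousMap.exists_mem_subalgebra_near_continuousMap_of_separatesPoints A sep f ε hε
  exact ⟨g, hgA, hg⟩

theorem exists_lip_near_vec (d : ℕ) (f : C(K', EuclideanSpace ℝ (Fin d))) {ε : ℝ} (hε : 0 < ε) :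
    ∃ h : C(K', EuclideanSpace ℝ (Fin d)),
      (∃ L : ℝ≥0, LipschitzWith L h) ∧ dist h f < ε := by
  set ε' : ℝ := ε / (d + 2) with hε'def
  have hε' : 0 < ε' := div_pos hε (by positivity)
  have hsel : ∀ i : Fin d, ∃ h : C(K', ℝ), (∃ L : ℝ≥0, LipschitzWith L h) ∧
      ‖h - ContinuousMap.mk (fun x => f x i)
        ((EuclideanSpace.proj (𝕜 := ℝ) i).continuous.comp f.continuous)‖ < ε' :=
    fun i => exists_lip_near _ hε'
  choose h hLip hnear using hsel
  choose L hL using hLip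
  set H : C(K', EuclideanSpace ℝ (Fin d)) :=
    ⟨fun x => (WithLp.equiv 2 (Fin d → ℝ)).symm (fun i => h i x),
      (PiLp.continuous_toLp 2 (fun _ : Fin d => ℝ)).comp
        (continuous_pi fun i => (h i).continuous)⟩ with hHdef
  have hHapp : ∀ (x : K') (i : Fin d), H x i = h i x := fun x i => rfl
  have hLsum : ∀ i, (L i : ℝ) ≤ ∑ j, (L j : ℝ) :=
    fun i => Finset.single_le_sum (fun j _ => (L j).coe_nonneg) (Finset.mem_univ i)
  refine ⟨H, ⟨(d + 1 : ℝ≥0) * ∑ j, L j, LipschitzWith.of_dist_le_mul fun x y => ?_⟩, ?_⟩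
  · have hb : ∀ i : Fin d, dist (H x i) (H y i) ≤ (∑ j, (L j : ℝ)) * dist x y := by
      intro i
      rw [hHapp, hHapp]
      exact ((hL i).dist_le_mul x y).trans
        (mul_le_mul_of_nonneg_right (hLsum i) dist_nonneg)
    have hsumnn : (0:ℝ) ≤ (∑ j, (L j : ℝ)) * dist x y := by positivity
    calc dist (H x) (H y) = Real.sqrt (∑ i, dist (H x i) (H y i) ^ 2) :=
          EuclideanSpace.dist_eq _ _
      _ ≤ Real.sqrt (∑ i : Fin d, ((∑ j, (L j : ℝ)) * dist x y) ^ 2) := by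
          apply Real.sqrt_le_sqrt
          exact Finset.sum_le_sum fun i _ => by
            have := hb i
            nlinarith [dist_nonneg (x := H x i) (y := H y i)]
      _ = Real.sqrt ((d : ℝ) * ((∑ j, (L j : ℝ)) * dist x y) ^ 2) := by
          rw [Finset.sum_const, Finset.card_univ, Fintype.card_fin, nsmul_eq_mul]
      _ ≤ Real.sqrt (((d : ℝ) + 1) ^ 2 * ((∑ j, (L j : ℝ)) * dist x y) ^ 2) := by
          apply Real.sqrt_le_sqrt
          have : (d : ℝ) ≤ ((d : ℝ) + 1) ^ 2 := by nlinarith [Nat.cast_nonneg (α := ℝ) d]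
          nlinarith [sq_nonneg ((∑ j, (L j : ℝ)) * dist x y)]
      _ = ((d : ℝ) + 1) * ((∑ j, (L j : ℝ)) * dist x y) := by
          rw [← mul_pow, Real.sqrt_sq (by positivity)]
      _ = ((d + 1 : ℝ≥0) * ∑ j, L j : ℝ≥0) * dist x y := by push_cast; ring
  · rw [ContinuousMap.dist_lt_iff hε]
    intro x
    have hcoord : ∀ i : Fin d, dist (H x i) (f x i) < ε' := by
      intro i
      rw [hHapp]
      have h1 : dist (h i x) (f x i) ≤ ‖h i - ContinuousMap.mk (fun x => f x i)
          ((EuclideanSpace.proj (𝕜 := ℝ) i).continuous.comp f.continuous)‖ := by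
        have := ContinuousMap.norm_coe_le_norm (h i - ContinuousMap.mk (fun x => f x i)
          ((EuclideanSpace.proj (𝕜 := ℝ) i).continuous.comp f.continuous)) x
        rw [dist_eq_norm]; exact this
      exact h1.trans_lt (hnear i)
    calc dist (H x) (f x) = Real.sqrt (∑ i, dist (H x i) (f x i) ^ 2) :=
          EuclideanSpace.dist_eq _ _
      _ ≤ Real.sqrt (∑ i : Fin d, ε' ^ 2) := by
          apply Real.sqrt_le_sqrt
          exact Finset.sum_le_sum fun i _ => by
            have := (hcoord i).le
            nlinarith [dist_nonneg (x := H x i) (y := f x i)]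
      _ = Real.sqrt ((d : ℝ) * ε' ^ 2) := by
          rw [Finset.sum_const, Finset.card_univ, Fintype.card_fin, nsmul_eq_mul]
      _ ≤ Real.sqrt (((d : ℝ) + 1) ^ 2 * ε' ^ 2) := by
          apply Real.sqrt_le_sqrt
          have : (d : ℝ) ≤ ((d : ℝ) + 1) ^ 2 := by nlinarith [Nat.cast_nonneg (α := ℝ) d]
          nlinarith [sq_nonneg ε']
      _ = ((d : ℝ) + 1) * ε' := by
          rw [← mul_pow, Real.sqrt_sq (by positivity)]
      _ < ((d : ℝ) + 2) * ε' := by nlinarith [hε']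
      _ = ε := by rw [hε'def]; field_simp

end Aux

set_option maxHeartbeats 1000000 in
/-- For a compact perfect metric space `K` and `d ≥ 1`, the generic continuous
map `f : K → ℝ^d` satisfies `limsup_{y→x} ‖f x - f y‖ / ρ(x,y) = ∞` at every
point `x ∈ K`; that is, the set of such `f` is comeager in `C(K, ℝ^d)`. -/
theorem stmt10 (d : ℕ) (hd : 1 ≤ d) (K : Type*) [MetricSpace K] [CompactSpace K]
    (hperf : ∀ x : K, Filter.NeBot (𝓝[≠] x)) :
    {f : C(K, EuclideanSpace ℝ (Fin d)) | ∀ x : K, ∀ C : ℝ,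
        ∃ᶠ y in 𝓝[≠] x, C < ‖f x - f y‖ / dist x y} ∈
      residual C(K, EuclideanSpace ℝ (Fin d)) := by
  set A : ℕ → ℕ → Set C(K, EuclideanSpace ℝ (Fin d)) := fun n m =>
    {f | ∃ x : K, ∀ y : K, dist x y < 1 / (m + 1) → ‖f x - f y‖ ≤ n * dist x y} with hA
  -- Each `A n m` is closed.
  have hclosed : ∀ n m, IsClosed (A n m) := by
    intro n m
    refine IsSeqClosed.isClosed ?_
    intro u f hu hlim
    choose x hx using hu
    obtain ⟨z, -, φ, hφ, hz⟩ := isCompact_univ.tendsto_subseq (fun k => mem_univ (x k))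
    have huni : TendstoUniformly (fun k => ⇑(u k)) (⇑f) atTop :=
      ContinuousMap.tendsto_iff_tendstoUniformly.mp hlim
    have huni' : TendstoUniformly (fun k => ⇑(u (φ k))) (⇑f) atTop :=
      fun V hV => hφ.tendsto_atTop.eventually (huni V hV)
    refine ⟨z, fun y hy => ?_⟩
    have h1 : Tendsto (fun k => dist (x (φ k)) y) atTop (𝓝 (dist z y)) :=
      hz.dist tendsto_const_nhds
    have hev : ∀ᶠ k in atTop, dist (x (φ k)) y < 1 / (m + 1) :=
      h1.eventually (gt_mem_nhds hy)
    have h2 : Tendsto (fun k => u (φ k) (x (φ k))) atTop (𝓝 (f z)) :=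
      huni'.tendsto_comp f.continuous.continuousAt hz
    have h3 : Tendsto (fun k => u (φ k) y) atTop (𝓝 (f y)) := huni'.tendsto_at y
    have h4 : Tendsto (fun k => ‖u (φ k) (x (φ k)) - u (φ k) y‖) atTop (𝓝 ‖f z - f y‖) :=
      (h2.sub h3).norm
    have h5 : Tendsto (fun k => (n : ℝ) * dist (x (φ k)) y) atTop (𝓝 ((n : ℝ) * dist z y)) :=
      h1.const_mul _
    refine le_of_tendsto_of_tendsto h4 h5 ?_
    filter_upwards [hev] with k hk
    exact hx (φ k) y hk
  -- Each `(A n m)ᶜ` is dense.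
  have hdense : ∀ n m, Dense (A n m)ᶜ := by
    intro n m
    rw [Metric.dense_iff]
    intro f r hr
    set δ : ℝ := 1 / (m + 1) with hδdef
    have hδ0 : 0 < δ := by positivity
    obtain ⟨h, ⟨L, hL⟩, hhf⟩ := exists_lip_near_vec d f (half_pos hr)
    set M : ℝ := (n : ℝ) + (L : ℝ) + 1 with hMdef
    have hM0 : 0 < M := by positivity
    set s : ℝ := min δ (r / (8 * M)) with hsdef
    have hs0 : 0 < s := lt_min hδ0 (by positivity)
    obtain ⟨F, -, hFfin, hFcov⟩ := finite_cover_balls_of_compact (X := K) isCompact_univ hs0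
    set e : EuclideanSpace ℝ (Fin d) := EuclideanSpace.single (⟨0, hd⟩ : Fin d) (1 : ℝ) with he
    have hne : ‖e‖ = 1 := by rw [he, EuclideanSpace.norm_single]; norm_num
    set Φ : K → ℝ := fun x => 2 * M * infDist x F with hΦdef
    have hΦapp : ∀ z : K, Φ z = 2 * M * infDist z F := fun z => rfl
    have hΦcont : Continuous Φ := continuous_const.mul (continuous_infDist_pt F)
    set g : C(K, EuclideanSpace ℝ (Fin d)) := ⟨fun x => h x + Φ x • e, h.continuous.add (hΦcont.smul continuous_const)⟩
      with hgdef
    have hΦle : ∀ x : K, infDist x F ≤ s := by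
      intro x
      rcases mem_iUnion₂.1 (hFcov (mem_univ x)) with ⟨p, hpF, hxp⟩
      exact (infDist_le_dist_of_mem hpF).trans (le_of_lt (mem_ball.1 hxp))
    -- dist g f < r
    have hgf : dist g f < r := by
      have h1 : dist g h ≤ 2 * M * s := by
        rw [ContinuousMap.dist_le (by positivity)]
        intro x
        have e1 : g x - h x = Φ x • e := by simp [hgdef]
        calc dist (g x) (h x) = ‖Φ x • e‖ := by rw [dist_eq_norm, e1]
          _ = |Φ x| := by rw [norm_smul, hne, Real.norm_eq_abs, mul_one]
          _ = 2 * M * infDist x F := abs_of_nonneg (by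
              have := infDist_nonneg (x := x) (s := F); positivity)
          _ ≤ 2 * M * s := by have := hΦle x; nlinarith
      have h3 : 2 * M * s ≤ r / 4 := by
        have hs' : s ≤ r / (8 * M) := min_le_right _ _
        have : 2 * M * s ≤ 2 * M * (r / (8 * M)) := by nlinarith
        calc 2 * M * s ≤ 2 * M * (r / (8 * M)) := this
          _ = r / 4 := by field_simp; ring
      have h4 : dist g f ≤ dist g h + dist h f := dist_triangle _ _ _
      nlinarith [h1, h3, h4, hhf]
    refine ⟨g, mem_inter (mem_ball.2 hgf) ?_⟩
    -- g ∉ A n m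
    intro hgA
    obtain ⟨x, hx⟩ := hgA
    have hFclosed : IsClosed F := hFfin.isClosed
    obtain ⟨p, hpF, hxp⟩ := mem_iUnion₂.1 (hFcov (mem_univ x))
    have hFne : F.Nonempty := ⟨p, hpF⟩
    -- generic norm lower bound
    have hlow : ∀ y : K, |Φ x - Φ y| - ‖h x - h y‖ ≤ ‖g x - g y‖ := by
      intro y
      have e1 : g x - g y = (h x - h y) + (Φ x - Φ y) • e := by
        simp only [hgdef, ContinuousMap.coe_mk, sub_smul]
        abel
      have e2 : ‖(Φ x - Φ y) • e‖ = |Φ x - Φ y| := by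
        rw [norm_smul, hne, Real.norm_eq_abs, mul_one]
      calc |Φ x - Φ y| - ‖h x - h y‖
          = ‖(Φ x - Φ y) • e‖ - ‖-(h x - h y)‖ := by rw [e2, norm_neg]
        _ ≤ ‖(Φ x - Φ y) • e - -(h x - h y)‖ := norm_sub_norm_le _ _
        _ = ‖g x - g y‖ := by rw [e1]; congr 1; abel
    have hhb : ∀ y : K, ‖h x - h y‖ ≤ (L : ℝ) * dist x y := by
      intro y
      have := hL.dist_le_mul x y
      rwa [dist_eq_norm] at this
    have key : ∃ y : K, dist x y < δ ∧ (n : ℝ) * dist x y < ‖g x - g y‖ := by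
      by_cases hxF : x ∈ F
      · -- x is a net point
        obtain ⟨t, ht0, htsep⟩ : ∃ t : ℝ, 0 < t ∧ ∀ q ∈ F, q ≠ x → t ≤ dist x q := by
          by_cases hne2 : (F \ {x}).Nonempty
          · refine ⟨infDist x (F \ {x}), ?_, fun q hq hqx =>
              infDist_le_dist_of_mem ⟨hq, by simp [hqx]⟩⟩
            exact ((hFfin.sdiff (t := {x})).isClosed.notMem_iff_infDist_pos hne2).1 (by simp)
          · exact ⟨1, one_pos, fun q hq hqx => absurd ⟨q, hq, by simp [hqx]⟩ hne2⟩
        set c : ℝ := min (min δ s) (t / 2) with hcdef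
        have hc0 : 0 < c := lt_min (lt_min hδ0 hs0) (by positivity)
        obtain ⟨y, hy1, hy2⟩ : ∃ y, y ∈ ball x c ∧ y ≠ x := by
          have hb : ball x c ∩ {x}ᶜ ∈ 𝓝[≠] x :=
            inter_mem (mem_nhdsWithin_of_mem_nhds (ball_mem_nhds x hc0)) self_mem_nhdsWithin
          have := (hperf x).nonempty_of_mem hb
          obtain ⟨y, hy1, hy2⟩ := this
          exact ⟨y, hy1, hy2⟩
        have hdyx : dist y x < c := mem_ball.1 hy1
        obtain ⟨q, hqF, hqd⟩ := hFfin.isCompact.exists_infDist_eq_dist hFne y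
        have hqx : q = x := by
          by_contra hqx
          have h1 : infDist y F ≤ dist y x := infDist_le_dist_of_mem hxF
          have h2 : t ≤ dist x q := htsep q hqF hqx
          have h3 : dist x q ≤ dist y x + dist y q := by
            rw [dist_comm y x]; exact dist_triangle _ _ _
          have h4 : dist y q ≤ dist y x := by rw [← hqd]; exact h1
          have h5 : c ≤ t / 2 := min_le_right _ _
          linarith
        have hΦy : Φ y = 2 * M * dist y x := by rw [hΦapp, hqd, hqx]
        have hΦx : Φ x = 0 := by rw [hΦapp, infDist_zero_of_mem hxF, mul_zero]
        have hd0 : 0 < dist x y := dist_pos.2 (Ne.symm hy2)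
        refine ⟨y, ?_, ?_⟩
        · calc dist x y = dist y x := dist_comm _ _
            _ < c := hdyx
            _ ≤ δ := le_trans (min_le_left _ _) (min_le_left _ _)
        · have hl := hlow y
          have hb := hhb y
          have habs : |Φ x - Φ y| = 2 * M * dist x y := by
            rw [hΦx, hΦy, dist_comm y x]
            rw [abs_of_nonpos (by nlinarith [dist_nonneg (x := x) (y := y)])]
            ring
          rw [habs] at hl
          nlinarith [hl, hb, hd0, hMdef, L.coe_nonneg, Nat.cast_nonneg (α := ℝ) n]
      · -- x is not a net point
        obtain ⟨y, hyF, hyd⟩ := hFfin.isCompact.exists_infDist_eq_dist hFne x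
        have hyx : y ≠ x := fun hh => hxF (hh ▸ hyF)
        have hd0 : 0 < dist x y := dist_pos.2 (Ne.symm hyx)
        have hdlt : dist x y < s := by
          rw [← hyd]
          exact lt_of_le_of_lt (infDist_le_dist_of_mem hpF) (mem_ball.1 hxp)
        have hΦx : Φ x = 2 * M * dist x y := by rw [hΦapp, hyd]
        have hΦy : Φ y = 0 := by rw [hΦapp, infDist_zero_of_mem hyF, mul_zero]
        refine ⟨y, lt_of_lt_of_le hdlt (min_le_left _ _), ?_⟩
        have hl := hlow y
        have hb := hhb y
        have habs : |Φ x - Φ y| = 2 * M * dist x y := by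
          rw [hΦx, hΦy, sub_zero, abs_of_nonneg (by positivity)]
        rw [habs] at hl
        nlinarith [hl, hb, hd0, hMdef, L.coe_nonneg, Nat.cast_nonneg (α := ℝ) n]
    obtain ⟨y, hyδ, hybig⟩ := key
    exact absurd (hx y hyδ) (not_le.2 hybig)
  -- assemble
  have hmem : (⋂ n, ⋂ m, (A n m)ᶜ) ∈ residual C(K, EuclideanSpace ℝ (Fin d)) :=
    countable_iInter_mem.2 fun n => countable_iInter_mem.2 fun m =>
      residual_of_dense_open (hclosed n m).isOpen_compl (hdense n m)
  refine mem_of_superset hmem ?_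
  intro f hf
  simp only [mem_iInter, mem_compl_iff] at hf
  intro x C
  by_contra hcon
  rw [Filter.not_frequently] at hcon
  have hev : ∀ᶠ y in 𝓝 x, y ∈ ({x}ᶜ : Set K) → ‖f x - f y‖ / dist x y ≤ C := by
    rw [← eventually_nhdsWithin_iff]
    filter_upwards [hcon] with y hy
    exact not_lt.1 hy
  rw [Metric.eventually_nhds_iff] at hev
  obtain ⟨ρ, hρ0, hρ⟩ := hev
  obtain ⟨m, hm⟩ := exists_nat_one_div_lt hρ0
  set n : ℕ := ⌈C⌉₊ with hn
  refine hf n m ⟨x, fun y hy => ?_⟩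
  by_cases hyx : y = x
  · subst hyx; simp
  · have hd0 : 0 < dist x y := dist_pos.2 (Ne.symm hyx)
    have h1 : dist y x < ρ := by
      rw [dist_comm]
      exact lt_trans hy (by exact_mod_cast hm)
    have h2 : ‖f x - f y‖ / dist x y ≤ C := hρ h1 (by simpa using hyx)
    have h3 : C ≤ (n : ℝ) := Nat.le_ceil C
    calc ‖f x - f y‖ = (‖f x - f y‖ / dist x y) * dist x y := by field_simp
      _ ≤ (n : ℝ) * dist x y := by nlinarith
end

section
/- Let s_n be a sequence of reals with s_n ↓ 0. Then there exist a sequence q_n ↓ 0 and a continuous function φ : [0,1] → [0,1] such that for all n ∈ ℕ, whenever I ⊆ [0,1] is an interval of length 2^{-n} and J is an interval of length s_n, we have λ({z ∈ I : φ(z) ∈ J}) ≤ q_n · λ(I). -/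
open MeasureTheory Set Filter Topology Metric

/-! ### Triangle wave -/

noncomputable def tw (x : ℝ) : ℝ := 2 * Metric.infDist x (Set.range ((↑) : ℤ → ℝ))

lemma mem_Zr (j : ℤ) : (j:ℝ) ∈ Set.range ((↑) : ℤ → ℝ) := ⟨j, rfl⟩

instance : Nonempty (Set.range ((↑) : ℤ → ℝ)) := ⟨⟨((0:ℤ):ℝ), mem_Zr 0⟩⟩

lemma tw_cont : Continuous tw :=
  continuous_const.mul ((lipschitz_infDist_pt _).continuous)

lemma tw_nonneg (x : ℝ) : 0 ≤ tw x := by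
  have := Metric.infDist_nonneg (x := x) (s := Set.range ((↑) : ℤ → ℝ))
  unfold tw; linarith

lemma tw_le_one (x : ℝ) : tw x ≤ 1 := by
  have h1 : Metric.infDist x (Set.range ((↑) : ℤ → ℝ)) ≤ dist x (round x : ℤ) :=
    infDist_le_dist_of_mem (mem_Zr _)
  have h2 : dist x ((round x : ℤ) : ℝ) ≤ 1/2 := by
    rw [Real.dist_eq]; exact abs_sub_round x
  unfold tw; linarith

lemma tw_lip (x y : ℝ) : |tw x - tw y| ≤ 2 * |x - y| := by
  have := (lipschitz_infDist_pt (Set.range ((↑) : ℤ → ℝ))).dist_le_mul x y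
  rw [Real.dist_eq, Real.dist_eq] at this
  unfold tw
  rw [← mul_sub, abs_mul]
  simp only [NNReal.coe_one, one_mul] at this
  norm_num
  linarith

lemma infDist_int_left (j : ℤ) (y : ℝ) (h1 : (j:ℝ) ≤ y) (h2 : y ≤ j + 1/2) :
    Metric.infDist y (Set.range ((↑) : ℤ → ℝ)) = y - j := by
  refine le_antisymm ?_ ?_
  · have := infDist_le_dist_of_mem (x := y) (mem_Zr j)
    rwa [Real.dist_eq, abs_of_nonneg (by linarith)] at this
  · rw [Metric.infDist_eq_iInf]
    refine le_ciInf fun p => ?_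
    obtain ⟨m, hm⟩ := p.2
    rw [Real.dist_eq, ← hm]
    rcases le_or_gt (m : ℝ) (j : ℝ) with h | h
    · rw [abs_of_nonneg (by linarith)]; linarith
    · have : (j:ℝ) + 1 ≤ m := by exact_mod_cast Int.add_one_le_iff.mpr (by exact_mod_cast h)
      rw [abs_of_nonpos (by linarith)]; linarith

lemma infDist_int_right (j : ℤ) (y : ℝ) (h1 : (j:ℝ) + 1/2 ≤ y) (h2 : y ≤ j + 1) :
    Metric.infDist y (Set.range ((↑) : ℤ → ℝ)) = (j:ℝ) + 1 - y := by
  refine le_antisymm ?_ ?_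
  · have := infDist_le_dist_of_mem (x := y) (mem_Zr (j+1))
    push_cast at this
    rw [Real.dist_eq, abs_of_nonpos (by linarith)] at this
    linarith
  · rw [Metric.infDist_eq_iInf]
    refine le_ciInf fun p => ?_
    obtain ⟨m, hm⟩ := p.2
    rw [Real.dist_eq, ← hm]
    rcases le_or_gt (m : ℝ) (j : ℝ) with h | h
    · rw [abs_of_nonneg (by linarith)]; linarith
    · have : (j:ℝ) + 1 ≤ m := by exact_mod_cast Int.add_one_le_iff.mpr (by exact_mod_cast h)
      rw [abs_of_nonpos (by linarith)]; linarith

lemma tw_eq_left (j : ℤ) (y : ℝ) (h1 : (j:ℝ) ≤ y) (h2 : y ≤ j + 1/2) :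
    tw y = 2 * (y - j) := by rw [tw, infDist_int_left j y h1 h2]

lemma tw_eq_right (j : ℤ) (y : ℝ) (h1 : (j:ℝ) + 1/2 ≤ y) (h2 : y ≤ j + 1) :
    tw y = 2 * ((j:ℝ) + 1 - y) := by rw [tw, infDist_int_right j y h1 h2]

/-! ### Per-branch estimate -/

lemma branch_bound (F : ℕ) (m : ℤ) (ψ H G : ℝ → ℝ) (ck v T c e : ℝ)
    (hck : 0 < ck)
    (hdecomp : ∀ z, ψ z = H z + ck * tw (2^F * z) + G z)
    (hH : ∀ z ∈ Set.Icc ((m:ℝ)/(2*2^F)) (((m:ℝ)+1)/(2*2^F)),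
      |H z - H ((m:ℝ)/(2*2^F))| ≤ v)
    (hG : ∀ z, 0 ≤ G z ∧ G z ≤ T) :
    volume {z ∈ Set.Icc ((m:ℝ)/(2*2^F)) (((m:ℝ)+1)/(2*2^F)) | ψ z ∈ Set.Icc c e} ≤
      ENNReal.ofReal ((e - c + 2*v + T) / ck / (2*2^F)) := by
  set P : ℝ := 2^F with hPdef
  have hP : (0:ℝ) < P := by positivity
  set h₀ : ℝ := H ((m:ℝ)/(2*P)) with hh0
  set lo : ℝ := (c - h₀ - v - T)/ck with hlo
  set hi : ℝ := (e - h₀ + v)/ck with hhi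
  have hlen : (hi - lo)/(2*P) = (e - c + 2*v + T) / ck / (2*P) := by
    rw [hhi, hlo]; field_simp; ring
  have key : ∀ z ∈ {z ∈ Set.Icc ((m:ℝ)/(2*P)) (((m:ℝ)+1)/(2*P)) | ψ z ∈ Set.Icc c e},
      lo ≤ tw (P * z) ∧ tw (P * z) ≤ hi := by
    rintro z ⟨hzB, hzJ⟩
    have hHz := hH z hzB
    have hGz := hG z
    have habs := abs_le.1 hHz
    have hde := hdecomp z
    constructor
    · rw [hlo, div_le_iff₀ hck]
      nlinarith [hzJ.1]
    · rw [hhi, le_div_iff₀ hck]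
      nlinarith [hzJ.2]
  rcases Int.even_or_odd m with ⟨j, hj⟩ | ⟨j, hj⟩
  · have hmr : (m:ℝ) = 2*j := by rw [hj]; push_cast; ring
    have htw : ∀ z ∈ Set.Icc ((m:ℝ)/(2*P)) (((m:ℝ)+1)/(2*P)), tw (P*z) = 2*P*z - m := by
      rintro z ⟨hz1, hz2⟩
      rw [div_le_iff₀ (by positivity), hmr] at hz1
      rw [le_div_iff₀ (by positivity), hmr] at hz2
      rw [tw_eq_left j (P*z) (by nlinarith) (by nlinarith)]
      rw [hmr]; ring
    have hsub : {z ∈ Set.Icc ((m:ℝ)/(2*P)) (((m:ℝ)+1)/(2*P)) | ψ z ∈ Set.Icc c e} ⊆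
        Set.Icc ((lo + m)/(2*P)) ((hi + m)/(2*P)) := by
      intro z hz
      have hk := key z hz
      rw [htw z hz.1] at hk
      constructor
      · rw [div_le_iff₀ (by positivity)]; linarith [hk.1]
      · rw [le_div_iff₀ (by positivity)]; linarith [hk.2]
    calc volume {z ∈ Set.Icc ((m:ℝ)/(2*P)) (((m:ℝ)+1)/(2*P)) | ψ z ∈ Set.Icc c e}
        ≤ volume (Set.Icc ((lo + m)/(2*P)) ((hi + m)/(2*P))) := measure_mono hsub
      _ = ENNReal.ofReal ((hi + m)/(2*P) - (lo + m)/(2*P)) := Real.volume_Icc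
      _ = ENNReal.ofReal ((e - c + 2*v + T) / ck / (2*P)) := by
          rw [← hlen]; congr 1; field_simp; ring
  · have hmr : (m:ℝ) = 2*j + 1 := by rw [hj]; push_cast; ring
    have htw : ∀ z ∈ Set.Icc ((m:ℝ)/(2*P)) (((m:ℝ)+1)/(2*P)), tw (P*z) = (m+1) - 2*P*z := by
      rintro z ⟨hz1, hz2⟩
      rw [div_le_iff₀ (by positivity), hmr] at hz1
      rw [le_div_iff₀ (by positivity), hmr] at hz2
      rw [tw_eq_right j (P*z) (by nlinarith) (by nlinarith)]
      rw [hmr]; ring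
    have hsub : {z ∈ Set.Icc ((m:ℝ)/(2*P)) (((m:ℝ)+1)/(2*P)) | ψ z ∈ Set.Icc c e} ⊆
        Set.Icc (((m:ℝ)+1-hi)/(2*P)) (((m:ℝ)+1-lo)/(2*P)) := by
      intro z hz
      have hk := key z hz
      rw [htw z hz.1] at hk
      constructor
      · rw [div_le_iff₀ (by positivity)]; linarith [hk.2]
      · rw [le_div_iff₀ (by positivity)]; linarith [hk.1]
    calc volume {z ∈ Set.Icc ((m:ℝ)/(2*P)) (((m:ℝ)+1)/(2*P)) | ψ z ∈ Set.Icc c e}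
        ≤ volume (Set.Icc (((m:ℝ)+1-hi)/(2*P)) (((m:ℝ)+1-lo)/(2*P))) := measure_mono hsub
      _ = ENNReal.ofReal (((m:ℝ)+1-lo)/(2*P) - ((m:ℝ)+1-hi)/(2*P)) := Real.volume_Icc
      _ = ENNReal.ofReal ((e - c + 2*v + T) / ck / (2*P)) := by
          rw [← hlen]; congr 1; field_simp; ring

/-! ### Coefficients and frequencies -/

noncomputable def cseq (k : ℕ) : ℝ := (2⁻¹ : ℝ)^((k+1)^2)

lemma cseq_pos (k : ℕ) : 0 < cseq k := by unfold cseq; positivity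

lemma cseq_le_one (k : ℕ) : cseq k ≤ 1 := by
  unfold cseq
  exact pow_le_one₀ (by norm_num) (by norm_num)

lemma cseq_le_geom (k : ℕ) : cseq k ≤ (2⁻¹:ℝ)^k :=
  pow_le_pow_of_le_one (by norm_num) (by norm_num) (by nlinarith)

lemma summable_cseq : Summable cseq :=
  Summable.of_nonneg_of_le (fun k => (cseq_pos k).le) cseq_le_geom
    (summable_geometric_of_lt_one (by norm_num) (by norm_num))

lemma tsum_cseq_le_one : ∑' k, cseq k ≤ 1 := by
  have h1 : ∑' k, cseq k ≤ ∑' k : ℕ, (2⁻¹:ℝ)^k * 2⁻¹ := by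
    refine Summable.tsum_le_tsum (fun k => ?_) summable_cseq ?_
    · calc cseq k ≤ (2⁻¹:ℝ)^(k+1) :=
            pow_le_pow_of_le_one (by norm_num) (by norm_num) (by nlinarith)
        _ = (2⁻¹:ℝ)^k * 2⁻¹ := by rw [pow_succ]
    · exact (summable_geometric_of_lt_one (by norm_num) (by norm_num)).mul_right _
  have h2 : ∑' k : ℕ, (2⁻¹:ℝ)^k * 2⁻¹ = 2 * 2⁻¹ := by
    rw [tsum_mul_right, tsum_geometric_of_lt_one (by norm_num) (by norm_num)]
    norm_num
  rw [h2] at h1; linarith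

def freq (N : ℕ → ℕ) : ℕ → ℕ
  | 0 => N 1
  | (k+1) => max (freq N k + ((k+2)^2 + k + 3)) (N (k+2))

lemma freq_strictMono (N : ℕ → ℕ) : StrictMono (freq N) :=
  strictMono_nat_of_lt_succ fun k => by
    have h1 : freq N k < freq N k + ((k+2)^2 + k + 3) := by omega
    exact lt_of_lt_of_le h1 (le_max_left _ _)

lemma freq_ge_N (N : ℕ → ℕ) (k : ℕ) : N (k+1) ≤ freq N k := by
  cases k with
  | zero => exact le_rfl
  | succ j => exact le_max_right _ _

lemma freq_gap (N : ℕ → ℕ) (k : ℕ) :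
    freq N k + ((k+2)^2 + k + 3) ≤ freq N (k+1) := le_max_left _ _

lemma sum_pow_freq (f : ℕ → ℕ) (hf : StrictMono f) :
    ∀ k, (∑ j ∈ Finset.range (k+1), 2^(f j)) ≤ 2^(f k + 1) := by
  intro k
  induction k with
  | zero =>
      rw [Finset.sum_range_one, pow_succ]
      omega
  | succ k ih =>
      rw [Finset.sum_range_succ]
      have h1 : f k + 1 ≤ f (k+1) := hf (Nat.lt_succ_self k)
      have h2 : (2:ℕ)^(f k + 1) ≤ 2^(f (k+1)) := Nat.pow_le_pow_right (by norm_num) h1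
      have h3 : (2:ℕ)^(f (k+1)) + 2^(f (k+1)) = 2^(f (k+1) + 1) := by rw [pow_succ]; ring
      omega

/-! ### Main theorem -/

set_option maxHeartbeats 2000000 in
/-- Equidistribution lemma: given `s_n ↓ 0` there exist `q_n ↓ 0` and a
continuous `φ : [0,1] → [0,1]` such that for every `n`, every subinterval `I` of
`[0,1]` of length `2^{-n}` and every interval `J` of length `s_n` satisfy
`λ({z ∈ I : φ z ∈ J}) ≤ q_n · λ(I)`. -/
theorem stmt11 (s : ℕ → ℝ) (hanti : Antitone s) (hlim : Tendsto s atTop (𝓝 0)) :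
    ∃ (q : ℕ → ℝ) (φ : ℝ → ℝ), Antitone q ∧ Tendsto q atTop (𝓝 0) ∧
      Continuous φ ∧ MapsTo φ (Icc 0 1) (Icc 0 1) ∧
      ∀ (n : ℕ) (a b c e : ℝ), Icc a b ⊆ Icc 0 1 → b - a = 2⁻¹ ^ n → e - c = s n →
        volume {z ∈ Icc a b | φ z ∈ Icc c e} ≤
          ENNReal.ofReal (q n) * volume (Icc a b) := by
  -- thresholds
  have hNex : ∀ k : ℕ, ∃ N : ℕ, ∀ n, N ≤ n → s n ≤ (2⁻¹:ℝ)^k * cseq k := by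
    intro k
    have hε : (0:ℝ) < (2⁻¹:ℝ)^k * cseq k := by
      have := cseq_pos k; positivity
    obtain ⟨N, hN⟩ := (Metric.tendsto_atTop.1 hlim) _ hε
    refine ⟨N, fun n hn => ?_⟩
    have := hN n hn
    rw [Real.dist_eq, sub_zero] at this
    exact (le_abs_self _).trans this.le
  choose N hN using hNex
  set f : ℕ → ℕ := freq N with hfdef
  have hfmono : StrictMono f := freq_strictMono N
  have hex : ∀ n : ℕ, ∃ k, n < f k := fun n =>
    ⟨n+1, lt_of_lt_of_le (Nat.lt_succ_self n) (hfmono.le_apply)⟩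
  set κ : ℕ → ℕ := fun n => Nat.find (hex n) with hκdef
  have hκ1 : ∀ n, n < f (κ n) := fun n => Nat.find_spec (hex n)
  have hκ2 : ∀ n k, k < κ n → f k ≤ n := fun n k hk =>
    Nat.le_of_not_lt (Nat.find_min (hex n) hk)
  have hκmono : Monotone κ := fun n m hnm =>
    Nat.find_mono (fun k hk => lt_of_le_of_lt hnm hk)
  have hκtop : Tendsto κ atTop atTop := by
    refine tendsto_atTop_atTop.2 fun K => ⟨f K, fun n hn => ?_⟩
    have h1 : f K ≤ n := hn
    have h2 : n < f (κ n) := hκ1 n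
    exact le_of_lt (hfmono.lt_iff_lt.1 (lt_of_le_of_lt h1 h2))
  -- the function
  set φ : ℝ → ℝ := fun x => ∑' k, cseq k * tw ((2:ℝ)^(f k) * x) with hφdef
  have hterm_nonneg : ∀ (k : ℕ) (x : ℝ), 0 ≤ cseq k * tw ((2:ℝ)^(f k) * x) :=
    fun k x => mul_nonneg (cseq_pos k).le (tw_nonneg _)
  have hterm_le : ∀ (k : ℕ) (x : ℝ), cseq k * tw ((2:ℝ)^(f k) * x) ≤ cseq k :=
    fun k x => mul_le_of_le_one_right (cseq_pos k).le (tw_le_one _)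
  have hsummable : ∀ x : ℝ, Summable (fun k => cseq k * tw ((2:ℝ)^(f k) * x)) := fun x =>
    Summable.of_nonneg_of_le (fun k => hterm_nonneg k x) (fun k => hterm_le k x) summable_cseq
  refine ⟨fun n => 8 * (2⁻¹:ℝ)^(κ n), φ, ?_, ?_, ?_, ?_, ?_⟩
  · -- Antitone q
    intro n m hnm
    exact mul_le_mul_of_nonneg_left
      (pow_le_pow_of_le_one (by norm_num) (by norm_num) (hκmono hnm)) (by norm_num)
  · -- Tendsto q → 0
    have h1 : Tendsto (fun j : ℕ => 8 * (2⁻¹:ℝ)^j) atTop (𝓝 0) := by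
      have := (tendsto_pow_atTop_nhds_zero_of_lt_one
        (by norm_num : (0:ℝ) ≤ 2⁻¹) (by norm_num)).const_mul (8:ℝ)
      simpa using this
    exact h1.comp hκtop
  · -- Continuity
    refine continuous_tsum (fun k => ?_) summable_cseq (fun k x => ?_)
    · exact continuous_const.mul (tw_cont.comp (continuous_const.mul continuous_id))
    · rw [Real.norm_eq_abs, abs_of_nonneg (hterm_nonneg k x)]
      exact hterm_le k x
  · -- MapsTo
    intro x _
    constructor
    · exact tsum_nonneg (fun k => hterm_nonneg k x)
    · calc φ x ≤ ∑' k, cseq k :=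
          Summable.tsum_le_tsum (fun k => hterm_le k x) (hsummable x) summable_cseq
        _ ≤ 1 := tsum_cseq_le_one
  · -- Main estimate
    intro n a b c e hsub hlen hJ
    have hpow_n_pos : (0:ℝ) < (2⁻¹:ℝ)^n := by positivity
    have hab : a ≤ b := by nlinarith
    have hvolab : volume (Icc a b) = ENNReal.ofReal (b - a) := Real.volume_Icc
    have hs0 : 0 ≤ s n := hanti.le_of_tendsto hlim n
    set k : ℕ := κ n with hkdef
    rcases Nat.eq_zero_or_pos k with hk0 | hk1
    · -- trivial case q n = 8 ≥ 1
      calc volume {z ∈ Icc a b | φ z ∈ Icc c e} ≤ volume (Icc a b) :=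
            measure_mono (sep_subset _ _)
        _ = 1 * volume (Icc a b) := (one_mul _).symm
        _ ≤ ENNReal.ofReal (8 * (2⁻¹:ℝ)^k) * volume (Icc a b) := by
            refine mul_le_mul_left ?_ _
            rw [hk0]
            norm_num
    -- main case
    have hn1 : n < f k := hκ1 n
    have hn2 : f (k-1) ≤ n := hκ2 n (k-1) (Nat.sub_lt hk1 one_pos)
    set F : ℕ := f k with hFdef
    set X : ℝ := (2:ℝ)^F with hXdef
    have hX : (0:ℝ) < X := by positivity
    set M : ℝ := 2 * X with hMdef
    have hM : (0:ℝ) < M := by positivity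
    -- decomposition
    set H : ℝ → ℝ := fun z => ∑ j ∈ Finset.range k, cseq j * tw ((2:ℝ)^(f j) * z) with hHdef
    set G : ℝ → ℝ := fun z => ∑' i, cseq (i + (k+1)) * tw ((2:ℝ)^(f (i + (k+1))) * z)
      with hGdef
    set T : ℝ := ∑' i, cseq (i + (k+1)) with hTdef
    set v : ℝ := (2:ℝ)^(f (k-1) + 2) / M with hvdef
    have hv0 : 0 ≤ v := by positivity
    have hdecomp : ∀ z, φ z = H z + cseq k * tw ((2:ℝ)^F * z) + G z := by
      intro z
      have hsz := hsummable z
      have h1 := Summable.sum_add_tsum_nat_add (f := fun j => cseq j * tw ((2:ℝ)^(f j) * z)) k hsz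
      have hsz2 : Summable (fun i => cseq (i + k) * tw ((2:ℝ)^(f (i + k)) * z)) :=
        (summable_nat_add_iff k).2 hsz
      have h2 := Summable.tsum_eq_zero_add hsz2
      simp only [zero_add] at h2
      have h3 : ∀ i : ℕ, i + 1 + k = i + (k+1) := fun i => by omega
      rw [hφdef]
      simp only
      rw [← h1, h2]
      simp only [h3]
      ring
    -- bounds on G
    have hG : ∀ z : ℝ, 0 ≤ G z ∧ G z ≤ T := by
      intro z
      have hs1 : Summable (fun i => cseq (i + (k+1)) * tw ((2:ℝ)^(f (i + (k+1))) * z)) :=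
        (summable_nat_add_iff (k+1)).2 (hsummable z)
      have hs2 : Summable (fun i => cseq (i + (k+1))) :=
        (summable_nat_add_iff (k+1)).2 summable_cseq
      constructor
      · exact tsum_nonneg (fun i => hterm_nonneg (i + (k+1)) z)
      · exact Summable.tsum_le_tsum (fun i => hterm_le (i + (k+1)) z) hs1 hs2
    -- bound on T
    have hT_le : T ≤ (2⁻¹:ℝ)^k * cseq k := by
      have hs2 : Summable (fun i => cseq (i + (k+1))) :=
        (summable_nat_add_iff (k+1)).2 summable_cseq
      have hgeo : Summable (fun i : ℕ => (2⁻¹:ℝ)^((k+2)^2) * (2⁻¹)^i) :=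
        (summable_geometric_of_lt_one (by norm_num) (by norm_num)).mul_left _
      have h1 : T ≤ ∑' i : ℕ, (2⁻¹:ℝ)^((k+2)^2) * (2⁻¹)^i := by
        refine Summable.tsum_le_tsum (fun i => ?_) hs2 hgeo
        calc cseq (i + (k+1)) ≤ (2⁻¹:ℝ)^((k+2)^2 + i) := by
              unfold cseq
              exact pow_le_pow_of_le_one (by norm_num) (by norm_num) (by nlinarith)
          _ = (2⁻¹:ℝ)^((k+2)^2) * (2⁻¹)^i := pow_add _ _ _
      have h2 : ∑' i : ℕ, (2⁻¹:ℝ)^((k+2)^2) * (2⁻¹)^i = (2⁻¹:ℝ)^((k+2)^2) * 2 := by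
        rw [tsum_mul_left, tsum_geometric_of_lt_one (by norm_num) (by norm_num)]
        norm_num
      have h3 : (2⁻¹:ℝ)^((k+2)^2) * 2 ≤ (2⁻¹:ℝ)^k * cseq k := by
        unfold cseq
        rw [← pow_add]
        have he : k + (k+1)^2 + 1 ≤ (k+2)^2 := by nlinarith
        have h4 : (2⁻¹:ℝ)^((k+2)^2) ≤ (2⁻¹:ℝ)^(k + (k+1)^2 + 1) :=
          pow_le_pow_of_le_one (by norm_num) (by norm_num) he
        calc (2⁻¹:ℝ)^((k+2)^2) * 2 ≤ (2⁻¹:ℝ)^(k + (k+1)^2 + 1) * 2 := by linarith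
          _ = (2⁻¹:ℝ)^(k + (k+1)^2) := by rw [pow_succ]; ring
      rw [h2] at h1
      linarith
    have hT0 : 0 ≤ T := le_trans (hG 0).1 (hG 0).2
    -- bound on s n
    have hs_le : s n ≤ (2⁻¹:ℝ)^k * cseq k := by
      refine hN k n ?_
      have hNf : N k ≤ f (k-1) := by
        have hk' : k = (k-1) + 1 := (Nat.succ_pred_eq_of_pos hk1).symm
        calc N k = N ((k-1)+1) := by rw [← hk']
          _ ≤ freq N (k-1) := freq_ge_N N (k-1)
      omega
    -- gap bound
    have hgap : f (k-1) + 3 + (k + (k+1)^2) ≤ F + 1 := by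
      have hg := freq_gap N (k-1)
      have hb1 : f (k-1) = freq N (k-1) := rfl
      have hbF : F = freq N k := rfl
      have hk' : (k-1) + 1 = k := Nat.succ_pred_eq_of_pos hk1
      rw [hk'] at hg
      have h2 : (k+1)^2 + k + 2 ≤ ((k-1)+2)^2 + (k-1) + 3 := by
        obtain ⟨j, hj⟩ : ∃ j, k = j + 1 := ⟨k-1, (Nat.succ_pred_eq_of_pos hk1).symm⟩
        rw [hj]
        simp only [Nat.add_sub_cancel]
        nlinarith
      omega
    -- bound on 2v
    have hv_le : 2 * v ≤ (2⁻¹:ℝ)^k * cseq k := by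
      have h2v : 2 * v = (2:ℝ)^(f (k-1) + 3) / M := by
        rw [hvdef, pow_succ]
        field_simp
        ring
      have hrhs : (2⁻¹:ℝ)^k * cseq k = 1 / ((2:ℝ)^(k + (k+1)^2)) := by
        unfold cseq
        rw [inv_pow, inv_pow, ← mul_inv, ← pow_add, one_div]
      have hMpow : M = (2:ℝ)^(F+1) := by
        rw [hMdef, hXdef, pow_succ]; ring
      rw [h2v, hrhs, div_le_div_iff₀ hM (by positivity), one_mul, ← pow_add, hMpow]
      exact pow_le_pow_right₀ (by norm_num) hgap
    -- Lipschitz bound for head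
    have hsum_pow : (∑ j ∈ Finset.range k, (2:ℝ)^(f j + 1)) ≤ (2:ℝ)^(f (k-1) + 2) := by
      have hk' : k = (k-1) + 1 := (Nat.succ_pred_eq_of_pos hk1).symm
      have hnat : (∑ j ∈ Finset.range k, 2^(f j)) ≤ 2^(f (k-1) + 1) := by
        rw [hk']
        exact sum_pow_freq f hfmono (k-1)
      have hnat2 : (∑ j ∈ Finset.range k, 2^(f j + 1)) ≤ 2^(f (k-1) + 2) := by
        have e1 : (∑ j ∈ Finset.range k, 2^(f j + 1)) = 2 * ∑ j ∈ Finset.range k, 2^(f j) := by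
          rw [Finset.mul_sum]
          refine Finset.sum_congr rfl fun j _ => ?_
          rw [pow_succ]; ring
        have e2 : (2:ℕ)^(f (k-1) + 2) = 2 * 2^(f (k-1) + 1) := by rw [pow_succ]; ring
        rw [e1, e2]
        omega
      calc (∑ j ∈ Finset.range k, (2:ℝ)^(f j + 1))
          = ((∑ j ∈ Finset.range k, 2^(f j + 1) : ℕ) : ℝ) := by push_cast; rfl
        _ ≤ (((2:ℕ)^(f (k-1) + 2) : ℕ) : ℝ) := by exact_mod_cast hnat2
        _ = (2:ℝ)^(f (k-1) + 2) := by push_cast; rfl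
    have hHlip : ∀ z z' : ℝ, |H z - H z'| ≤ (2:ℝ)^(f (k-1) + 2) * |z - z'| := by
      intro z z'
      rw [hHdef]
      simp only
      rw [← Finset.sum_sub_distrib]
      refine (Finset.abs_sum_le_sum_abs _ _).trans ?_
      have hterm : ∀ j ∈ Finset.range k,
          |cseq j * tw ((2:ℝ)^(f j)*z) - cseq j * tw ((2:ℝ)^(f j)*z')| ≤
            (2:ℝ)^(f j + 1) * |z - z'| := by
        intro j _
        rw [← mul_sub, abs_mul]
        have h1 := tw_lip ((2:ℝ)^(f j)*z) ((2:ℝ)^(f j)*z')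
        have h2 : |(2:ℝ)^(f j)*z - (2:ℝ)^(f j)*z'| = (2:ℝ)^(f j) * |z - z'| := by
          rw [← mul_sub, abs_mul, abs_of_pos (by positivity : (0:ℝ) < (2:ℝ)^(f j))]
        have h3 : |cseq j| ≤ 1 := by
          rw [abs_of_pos (cseq_pos j)]; exact cseq_le_one j
        have h4 : |tw ((2:ℝ)^(f j)*z) - tw ((2:ℝ)^(f j)*z')| ≤ 2 * ((2:ℝ)^(f j) * |z - z'|) := by
          rw [← h2]; exact h1
        calc |cseq j| * |tw ((2:ℝ)^(f j)*z) - tw ((2:ℝ)^(f j)*z')|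
            ≤ 1 * (2 * ((2:ℝ)^(f j) * |z - z'|)) :=
              mul_le_mul h3 h4 (abs_nonneg _) (by norm_num)
          _ = (2:ℝ)^(f j + 1) * |z - z'| := by rw [pow_succ]; ring
      refine (Finset.sum_le_sum hterm).trans ?_
      rw [← Finset.sum_mul]
      exact mul_le_mul_of_nonneg_right hsum_pow (abs_nonneg _)
    -- per-branch bound
    set ℓ : ℝ := (s n + 2*v + T) / cseq k / M with hℓdef
    have hbranch : ∀ m : ℤ,
        volume {z ∈ Set.Icc ((m:ℝ)/M) (((m:ℝ)+1)/M) | φ z ∈ Set.Icc c e} ≤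
          ENNReal.ofReal ℓ := by
      intro m
      have hHloc : ∀ z ∈ Set.Icc ((m:ℝ)/(2*2^F)) (((m:ℝ)+1)/(2*2^F)),
          |H z - H ((m:ℝ)/(2*2^F))| ≤ v := by
        intro z hz
        have h1 := hHlip z ((m:ℝ)/(2*2^F))
        have hz1 := hz.1
        have hz2 := hz.2
        have hd : |z - (m:ℝ)/(2*2^F)| ≤ 1 / M := by
          rw [abs_of_nonneg (by linarith)]
          have : ((m:ℝ)+1)/(2*2^F) - (m:ℝ)/(2*2^F) = 1 / M := by
            rw [hMdef, hXdef]; field_simp; ring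
          linarith [this ▸ (sub_le_sub_right hz2 ((m:ℝ)/(2*2^F)))]
        calc |H z - H ((m:ℝ)/(2*2^F))| ≤ (2:ℝ)^(f (k-1) + 2) * |z - (m:ℝ)/(2*2^F)| := h1
          _ ≤ (2:ℝ)^(f (k-1) + 2) * (1 / M) :=
              mul_le_mul_of_nonneg_left hd (by positivity)
          _ = v := by rw [hvdef, mul_one_div]
      have hb := branch_bound F m φ H G (cseq k) v T c e (cseq_pos k) hdecomp hHloc hG
      have hMeq : (2:ℝ) * 2^F = M := by rw [hMdef, hXdef]
      have heℓ : (e - c + 2*v + T) / cseq k / (2*2^F) = ℓ := by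
        rw [hℓdef, hMeq, hJ]
      rw [hMeq, heℓ] at hb
      exact hb
    -- covering
    set m₀ : ℤ := ⌊a*M⌋ with hm0def
    set m₁ : ℤ := ⌊b*M⌋ with hm1def
    have hcov : {z ∈ Icc a b | φ z ∈ Icc c e} ⊆
        ⋃ m ∈ (Finset.Icc m₀ m₁ : Finset ℤ),
          {z ∈ Set.Icc ((m:ℝ)/M) (((m:ℝ)+1)/M) | φ z ∈ Set.Icc c e} := by
      rintro z ⟨hz, hφz⟩
      have hmem : ⌊z*M⌋ ∈ (Finset.Icc m₀ m₁ : Finset ℤ) := by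
        rw [Finset.mem_Icc]
        exact ⟨Int.floor_le_floor (mul_le_mul_of_nonneg_right hz.1 hM.le),
          Int.floor_le_floor (mul_le_mul_of_nonneg_right hz.2 hM.le)⟩
      refine Set.mem_biUnion hmem ⟨⟨?_, ?_⟩, hφz⟩
      · rw [div_le_iff₀ hM]
        exact Int.floor_le (z*M)
      · rw [le_div_iff₀ hM]
        exact (Int.lt_floor_add_one (z*M)).le
    -- cardinality bound
    have hXB : 2 ≤ X * (2⁻¹:ℝ)^n := by
      have h1 : (2:ℝ)^(n+1) ≤ (2:ℝ)^F := pow_le_pow_right₀ (by norm_num) (by omega)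
      have h2 : X * (2⁻¹:ℝ)^n = (2:ℝ)^F / (2:ℝ)^n := by
        rw [hXdef, inv_pow, div_eq_mul_inv]
      rw [h2, le_div_iff₀ (by positivity)]
      calc (2:ℝ) * 2^n = (2:ℝ)^(n+1) := by rw [pow_succ]; ring
        _ ≤ (2:ℝ)^F := h1
    have hcard : ((Finset.Icc m₀ m₁).card : ℝ) ≤ (b-a)*M + 2 := by
      rw [Int.card_Icc]
      rcases le_or_gt m₀ (m₁+1) with h | h
      · have h0 : (0:ℤ) ≤ m₁ + 1 - m₀ := by omega
        have he : ((m₁ + 1 - m₀).toNat : ℝ) = ((m₁:ℝ) + 1 - m₀) := by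
          calc ((m₁ + 1 - m₀).toNat : ℝ) = (((m₁ + 1 - m₀).toNat : ℤ) : ℝ) := by push_cast; ring
            _ = ((m₁ + 1 - m₀ : ℤ) : ℝ) := by rw [Int.toNat_of_nonneg h0]
            _ = (m₁:ℝ) + 1 - m₀ := by push_cast; ring
        rw [he]
        have h1 : (m₁:ℝ) ≤ b*M := Int.floor_le _
        have h2 : a*M - 1 < (m₀:ℝ) := Int.sub_one_lt_floor _
        nlinarith
      · have he : (m₁ + 1 - m₀).toNat = 0 := by omega
        rw [he]
        push_cast
        nlinarith
    have hcard3 : ((Finset.Icc m₀ m₁).card : ℝ) ≤ 3 * (X * (2⁻¹:ℝ)^n) := by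
      have : (b-a)*M = 2 * (X * (2⁻¹:ℝ)^n) := by
        rw [hlen, hMdef]; ring
      rw [this] at hcard
      linarith
    -- bound on ℓ
    have hℓ0 : 0 ≤ ℓ := by
      rw [hℓdef]
      have := cseq_pos k
      positivity
    have hℓ_le : ℓ ≤ 3 * (2⁻¹:ℝ)^k / M := by
      rw [hℓdef]
      have hnum : (s n + 2*v + T) / cseq k ≤ 3 * (2⁻¹:ℝ)^k := by
        rw [div_le_iff₀ (cseq_pos k)]
        nlinarith [hs_le, hv_le, hT_le]
      exact (div_le_div_iff_of_pos_right hM).2 hnum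
    -- final numeric bound
    have hfinal : ((Finset.Icc m₀ m₁).card : ℝ) * ℓ ≤ 8 * (2⁻¹:ℝ)^k * (b - a) := by
      have hpos1 : (0:ℝ) ≤ 3 * (X * (2⁻¹:ℝ)^n) := by positivity
      have h1 : ((Finset.Icc m₀ m₁).card : ℝ) * ℓ ≤ (3 * (X * (2⁻¹:ℝ)^n)) * (3 * (2⁻¹:ℝ)^k / M) :=
        mul_le_mul hcard3 hℓ_le hℓ0 hpos1
      have h2 : (3 * (X * (2⁻¹:ℝ)^n)) * (3 * (2⁻¹:ℝ)^k / M) =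
          (9/2) * ((2⁻¹:ℝ)^n * (2⁻¹:ℝ)^k) := by
        rw [hMdef]
        field_simp
        ring
      rw [hlen]
      have hpk : (0:ℝ) ≤ (2⁻¹:ℝ)^k := by positivity
      nlinarith [h1, h2, mul_nonneg hpow_n_pos.le hpk]
    calc volume {z ∈ Icc a b | φ z ∈ Icc c e}
        ≤ volume (⋃ m ∈ (Finset.Icc m₀ m₁ : Finset ℤ),
            {z ∈ Set.Icc ((m:ℝ)/M) (((m:ℝ)+1)/M) | φ z ∈ Set.Icc c e}) := measure_mono hcov
      _ ≤ ∑ m ∈ Finset.Icc m₀ m₁,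
            volume {z ∈ Set.Icc ((m:ℝ)/M) (((m:ℝ)+1)/M) | φ z ∈ Set.Icc c e} :=
          measure_biUnion_finset_le _ _
      _ ≤ ∑ _m ∈ Finset.Icc m₀ m₁, ENNReal.ofReal ℓ := Finset.sum_le_sum fun m _ => hbranch m
      _ = ((Finset.Icc m₀ m₁).card : ENNReal) * ENNReal.ofReal ℓ := by
          rw [Finset.sum_const, nsmul_eq_mul]
      _ = ENNReal.ofReal (((Finset.Icc m₀ m₁).card : ℝ) * ℓ) := by
          rw [ENNReal.ofReal_mul (Nat.cast_nonneg _), ENNReal.ofReal_natCast]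
      _ ≤ ENNReal.ofReal ((8 * (2⁻¹:ℝ)^k) * (b - a)) := ENNReal.ofReal_le_ofReal hfinal
      _ = ENNReal.ofReal (8 * (2⁻¹:ℝ)^k) * volume (Icc a b) := by
          rw [hvolab, ← ENNReal.ofReal_mul (by positivity)]
end

section
/- Let s_n ↓ 0. Then there exist N ∈ ℕ and a continuous function φ : [0,1] → [0,1] such that for all n ≥ N, the oscillation of φ on every subinterval of [0,1] of length 2^{-n} is at least s_n. -/
open MeasureTheory Set Filter Topology


noncomputable def triwave (x : ℝ) : ℝ := |x - round x|

lemma triwave_nonneg (x : ℝ) : 0 ≤ triwave x := abs_nonneg _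

lemma triwave_le_half (x : ℝ) : triwave x ≤ 1/2 := abs_sub_round x

lemma triwave_min (x : ℝ) (m : ℤ) : triwave x ≤ |x - m| := by
  by_cases h : m = round x
  · subst h; exact le_refl _
  · have h1 : (1:ℝ) ≤ |(m:ℝ) - round x| := by
      have : (1:ℤ) ≤ |m - round x| := Int.one_le_abs (sub_ne_zero.mpr h)
      calc (1:ℝ) = ((1:ℤ):ℝ) := by norm_num
        _ ≤ ((|m - round x| : ℤ) : ℝ) := by exact_mod_cast this
        _ = |(m:ℝ) - round x| := by push_cast; ring_nf
    have h2 : |(m:ℝ) - round x| ≤ |(m:ℝ) - x| + |x - round x| := by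
      have := abs_sub_le ((m:ℝ)) x (round x)
      linarith
    have h3 := abs_sub_round x
    calc triwave x ≤ 1/2 := h3
      _ ≤ |(m:ℝ) - x| := by linarith
      _ = |x - m| := abs_sub_comm _ _

lemma triwave_lip (x y : ℝ) : |triwave x - triwave y| ≤ |x - y| := by
  have h1 : triwave x ≤ |x - y| + triwave y := by
    have := triwave_min x (round y)
    have h2 : |x - (round y : ℝ)| ≤ |x - y| + |y - round y| := by
      have := abs_sub_le x y ((round y : ℝ)); linarith
    calc triwave x ≤ |x - (round y:ℝ)| := this
      _ ≤ |x - y| + triwave y := h2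
  have h2 : triwave y ≤ |x - y| + triwave x := by
    have := triwave_min y (round x)
    have h3 : |y - (round x : ℝ)| ≤ |y - x| + |x - round x| := by
      have := abs_sub_le y x ((round x : ℝ)); linarith
    calc triwave y ≤ |y - (round x:ℝ)| := this
      _ ≤ |y - x| + triwave x := h3
      _ = |x - y| + triwave x := by rw [abs_sub_comm]
  rw [abs_sub_le_iff]; constructor <;> linarith

lemma triwave_cont : Continuous triwave := by
  have : LipschitzWith 1 triwave := by
    apply LipschitzWith.of_dist_le_mul
    intro x y
    simpa [Real.dist_eq] using triwave_lip x y
  exact this.continuous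

lemma triwave_int (k : ℤ) : triwave (k : ℝ) = 0 := by
  simp [triwave, round_intCast]

lemma triwave_half (k : ℤ) : triwave ((k : ℝ) + 1/2) = 1/2 := by
  have : round ((k:ℝ) + 1/2) = k + 1 := by
    rw [round_eq]
    norm_num
    rw [show (k:ℝ) + 1/2 + 1/2 = ((k+1 : ℤ):ℝ) by push_cast; ring]
    exact Int.floor_intCast _
  rw [triwave, this]
  push_cast
  rw [show (k:ℝ) + 1/2 - (k+1) = -(1/2) by ring]
  norm_num

lemma triwave_halfint (l : ℤ) : |triwave ((l:ℝ)/2) - triwave (((l:ℝ)+1)/2)| = 1/2 := by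
  rcases Int.even_or_odd l with ⟨k, hk⟩ | ⟨k, hk⟩
  · subst hk
    rw [show ((k+k : ℤ):ℝ)/2 = ((k:ℤ):ℝ) by push_cast; ring,
        show (((k+k:ℤ):ℝ)+1)/2 = ((k:ℤ):ℝ) + 1/2 by push_cast; ring,
        triwave_int, triwave_half]
    norm_num
  · subst hk
    rw [show ((2*k+1 : ℤ):ℝ)/2 = ((k:ℤ):ℝ) + 1/2 by push_cast; ring,
        show (((2*k+1:ℤ):ℝ)+1)/2 = ((k+1:ℤ):ℝ) by push_cast; ring,
        triwave_int, triwave_half]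
    norm_num

/-- Given `s_n ↓ 0` there exist `N ∈ ℕ` and a continuous `φ : [0,1] → [0,1]`
such that for all `n ≥ N`, the oscillation of `φ` on every subinterval of
`[0,1]` of length `2^{-n}` is at least `s_n`. -/
theorem stmt12 (s : ℕ → ℝ) (hanti : Antitone s) (hlim : Tendsto s atTop (𝓝 0)) :
    ∃ (N : ℕ) (φ : ℝ → ℝ), Continuous φ ∧ MapsTo φ (Icc 0 1) (Icc 0 1) ∧
      ∀ n, N ≤ n → ∀ a b : ℝ, Icc a b ⊆ Icc 0 1 → b - a = 2⁻¹ ^ n →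
        s n ≤ sSup {t : ℝ | ∃ x ∈ Icc a b, ∃ y ∈ Icc a b, t = |φ x - φ y|} := by
  have hs0 : ∀ n, 0 ≤ s n := by
    intro n
    refine le_of_tendsto hlim ?_
    filter_upwards [eventually_ge_atTop n] with k hk
    exact hanti hk
  have hF' : ∀ j : ℕ, ∃ K, s K ≤ (2⁻¹:ℝ)^(j+5) :=
    fun j => (hlim.eventually (eventually_le_nhds (by positivity))).exists
  choose F hF using hF'
  let m : ℕ → ℕ := fun j => Nat.rec (F 0) (fun i mi => max (mi + i + 4) (F (i+1))) j
  have hms : ∀ i, m (i+1) = max (m i + i + 4) (F (i+1)) := fun i => rfl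
  have hm1 : ∀ i, m i + i + 4 ≤ m (i+1) := fun i => by rw [hms]; exact le_max_left _ _
  have hmF : ∀ j, F j ≤ m j := by
    intro j; cases j with
    | zero => exact le_refl _
    | succ i => rw [hms]; exact le_max_right _ _
  have hsm : ∀ j, s (m j) ≤ (2⁻¹:ℝ)^(j+5) := fun j => (hanti (hmF j)).trans (hF j)
  have hm_mono : StrictMono m :=
    strictMono_nat_of_lt_succ (fun i => lt_of_lt_of_le (by omega) (hm1 i))
  let c : ℕ → ℝ := fun j => Nat.rec 0 (fun i _ => 2 * s (m i) + (2⁻¹:ℝ)^(i+2)) j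
  have hc0 : c 0 = 0 := rfl
  have hcs : ∀ i, c (i+1) = 2 * s (m i) + (2⁻¹:ℝ)^(i+2) := fun i => rfl
  have hc_nonneg : ∀ j, 0 ≤ c j := by
    intro j; cases j with
    | zero => rw [hc0]
    | succ i => rw [hcs]; have := hs0 (m i); positivity
  have hc_le : ∀ j, c j ≤ (2⁻¹:ℝ)^j := by
    intro j; cases j with
    | zero => rw [hc0]; positivity
    | succ i =>
      rw [hcs]
      have h1 := hsm i
      have hp : (0:ℝ) ≤ (2⁻¹:ℝ)^i := by positivity
      have e5 : (2⁻¹:ℝ)^(i+5) = (2⁻¹:ℝ)^i * (1/32) := by rw [pow_add]; norm_num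
      have e2 : (2⁻¹:ℝ)^(i+2) = (2⁻¹:ℝ)^i * (1/4) := by rw [pow_add]; norm_num
      have e1 : (2⁻¹:ℝ)^(i+1) = (2⁻¹:ℝ)^i * (1/2) := by rw [pow_add]; norm_num
      rw [e2, e1]; rw [e5] at h1; linarith
  let f : ℕ → ℝ → ℝ := fun j x => c j * triwave ((2:ℝ)^(m j) * x)
  have hfb : ∀ j x, ‖f j x‖ ≤ (2⁻¹:ℝ)^(j+1) := by
    intro j x
    rw [Real.norm_eq_abs]
    show |c j * triwave ((2:ℝ)^(m j) * x)| ≤ _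
    rw [abs_mul, abs_of_nonneg (hc_nonneg j), abs_of_nonneg (triwave_nonneg _)]
    calc c j * triwave ((2:ℝ)^(m j) * x) ≤ (2⁻¹:ℝ)^j * (1/2) :=
          mul_le_mul (hc_le j) (triwave_le_half _) (triwave_nonneg _) (by positivity)
      _ = (2⁻¹:ℝ)^(j+1) := by rw [pow_succ]; norm_num
  have hu : Summable (fun j => (2⁻¹:ℝ)^(j+1)) := by
    simp_rw [pow_succ]
    exact (summable_geometric_of_lt_one (by norm_num) (by norm_num)).mul_right _
  have hsumf : ∀ x, Summable (fun j => f j x) :=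
    fun x => Summable.of_norm_bounded hu (fun j => hfb j x)
  set φ : ℝ → ℝ := fun x => ∑' j, f j x with hφ
  have hcont : Continuous φ :=
    continuous_tsum (fun j => continuous_const.mul (triwave_cont.comp
      (continuous_const.mul continuous_id))) hu hfb
  have htsum_u : ∑' j, (2⁻¹:ℝ)^(j+1) = 1 := by
    simp_rw [pow_succ]
    rw [tsum_mul_right, tsum_geometric_of_lt_one (by norm_num) (by norm_num)]
    norm_num
  have hrange : ∀ x, φ x ∈ Icc (0:ℝ) 1 := by
    intro x
    constructor
    · exact tsum_nonneg (fun j => mul_nonneg (hc_nonneg j) (triwave_nonneg _))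
    · calc φ x ≤ ∑' j, (2⁻¹:ℝ)^(j+1) :=
            Summable.tsum_le_tsum (fun j => le_trans (le_abs_self _) (hfb j x)) (hsumf x) hu
        _ = 1 := htsum_u
  refine ⟨m 0 + 1, φ, hcont, fun x _ => hrange x, ?_⟩
  intro n hn A B hsub hlen
  haveI : DecidablePred (fun j => n ≤ m j) := Classical.decPred _
  have hex : ∃ j, n ≤ m j := ⟨n, hm_mono.le_apply⟩
  obtain ⟨j, hj1, hj2⟩ : ∃ j, n ≤ m j ∧ ∀ i < j, m i < n := by
    refine ⟨Nat.find hex, Nat.find_spec hex, fun i hi => ?_⟩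
    exact lt_of_not_ge (Nat.find_min hex hi)
  obtain ⟨k, rfl⟩ : ∃ k, j = k + 1 := by
    cases j with
    | zero => exact absurd hj1 (by omega)
    | succ k => exact ⟨k, rfl⟩
  set L : ℝ := (2⁻¹:ℝ)^(m (k+1) + 1) with hL
  have hL0 : 0 < L := by positivity
  set l : ℤ := ⌈A / L⌉ with hl
  set x : ℝ := (l:ℝ) * L with hx
  set y : ℝ := x + L with hy
  have hax : A ≤ x := by
    rw [hx]
    have := Int.le_ceil (A / L)
    calc A = (A / L) * L := by field_simp
      _ ≤ (l:ℝ) * L := mul_le_mul_of_nonneg_right this hL0.le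
  have h2L : 2 * L = (2⁻¹:ℝ)^(m (k+1)) := by rw [hL, pow_succ]; ring
  have h2Ln : 2 * L ≤ (2⁻¹:ℝ)^n := by
    rw [h2L]
    exact pow_le_pow_of_le_one (by norm_num) (by norm_num) hj1
  have hyB : y ≤ B := by
    have h1 : (l:ℝ) < A / L + 1 := Int.ceil_lt_add_one _
    have h3 : y < A + 2 * L := by
      rw [hy, hx]
      have : (l:ℝ) * L < (A / L + 1) * L := mul_lt_mul_of_pos_right h1 hL0
      have hAL : (A / L + 1) * L = A + L := by field_simp
      nlinarith
    have hB : A + (2⁻¹:ℝ)^n = B := by linarith [hlen]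
    linarith
  have hxy : x ≤ y := by rw [hy]; linarith
  have hxmem : x ∈ Icc A B := ⟨hax, le_trans hxy hyB⟩
  have hymem : y ∈ Icc A B := ⟨le_trans hax hxy, hyB⟩
  -- power helper
  have hpow : ∀ p q : ℕ, q ≤ p → (2:ℝ)^p * (2⁻¹:ℝ)^q = 2^(p - q) := by
    intro p q h
    rw [inv_pow]
    rw [show p = (p - q) + q by omega, pow_add]
    field_simp
    congr 1; omega
  -- vanishing of high terms at grid points
  have hzero : ∀ (p : ℤ) i, k + 2 ≤ i → triwave ((2:ℝ)^(m i) * ((p:ℝ) * L)) = 0 := by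
    intro p i hi
    have h1 : m (k+1) + 1 ≤ m i := by
      have : m (k+1) < m i := hm_mono (show k + 1 < i by omega)
      omega
    have h2 : (2:ℝ)^(m i) * ((p:ℝ) * L) = ((p * 2^(m i - (m (k+1)+1)) : ℤ) : ℝ) := by
      rw [hL, show (2:ℝ)^(m i) * ((p:ℝ) * (2⁻¹:ℝ)^(m (k+1)+1))
          = (p:ℝ) * ((2:ℝ)^(m i) * (2⁻¹:ℝ)^(m (k+1)+1)) by ring, hpow _ _ h1]
      push_cast
      ring
    rw [h2, triwave_int]
  have hy' : y = ((l + 1 : ℤ):ℝ) * L := by rw [hy, hx]; push_cast; ring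
  have hdiff : φ x - φ y = ∑ i ∈ Finset.range (k+2), (f i x - f i y) := by
    have hvan : ∀ i ∉ Finset.range (k+2), f i x - f i y = 0 := by
      intro i hi
      have hi2 : k + 2 ≤ i := by simp [Finset.mem_range] at hi; omega
      have hfx : f i x = 0 := by
        show c i * triwave ((2:ℝ)^(m i) * x) = 0
        rw [hx, hzero l i hi2, mul_zero]
      have hfy : f i y = 0 := by
        show c i * triwave ((2:ℝ)^(m i) * y) = 0
        rw [hy', hzero (l+1) i hi2, mul_zero]
      rw [hfx, hfy, sub_zero]
    rw [← tsum_eq_sum (L := SummationFilter.unconditional ℕ) hvan, Summable.tsum_sub (hsumf x) (hsumf y)]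
  -- the main term
  have hone : (2:ℝ)^(m (k+1)) * (2⁻¹:ℝ)^(m (k+1)) = 1 := by
    rw [inv_pow, mul_inv_cancel₀ (by positivity)]
  have e1 : (2:ℝ)^(m (k+1)) * x = (l:ℝ)/2 := by
    rw [hx, hL, pow_succ]
    calc (2:ℝ)^(m (k+1)) * ((l:ℝ) * ((2⁻¹:ℝ)^(m (k+1)) * 2⁻¹))
        = (l:ℝ) * ((2:ℝ)^(m (k+1)) * (2⁻¹:ℝ)^(m (k+1))) * 2⁻¹ := by ring
      _ = (l:ℝ)/2 := by rw [hone]; ring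
  have e2 : (2:ℝ)^(m (k+1)) * y = ((l:ℝ)+1)/2 := by
    rw [hy', hL, pow_succ]
    push_cast
    calc (2:ℝ)^(m (k+1)) * (((l:ℝ)+1) * ((2⁻¹:ℝ)^(m (k+1)) * 2⁻¹))
        = ((l:ℝ)+1) * ((2:ℝ)^(m (k+1)) * (2⁻¹:ℝ)^(m (k+1))) * 2⁻¹ := by ring
      _ = ((l:ℝ)+1)/2 := by rw [hone]; ring
  have hterm_main : |f (k+1) x - f (k+1) y| = c (k+1) * (1/2) := by
    show |c (k+1) * triwave ((2:ℝ)^(m (k+1)) * x) - c (k+1) * triwave ((2:ℝ)^(m (k+1)) * y)| = _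
    rw [e1, e2, ← mul_sub, abs_mul, abs_of_nonneg (hc_nonneg (k+1)), triwave_halfint]
  have hterm_small : ∀ i, |f i x - f i y| ≤ c i * (2:ℝ)^(m i) * L := by
    intro i
    show |c i * triwave ((2:ℝ)^(m i) * x) - c i * triwave ((2:ℝ)^(m i) * y)| ≤ _
    rw [← mul_sub, abs_mul, abs_of_nonneg (hc_nonneg i)]
    have hlip := triwave_lip ((2:ℝ)^(m i) * x) ((2:ℝ)^(m i) * y)
    have h2 : |(2:ℝ)^(m i) * x - (2:ℝ)^(m i) * y| = (2:ℝ)^(m i) * L := by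
      rw [show (2:ℝ)^(m i) * x - (2:ℝ)^(m i) * y = -((2:ℝ)^(m i) * L) by rw [hy]; ring,
          abs_neg, abs_of_nonneg (by positivity)]
    calc c i * |triwave ((2:ℝ)^(m i) * x) - triwave ((2:ℝ)^(m i) * y)|
        ≤ c i * ((2:ℝ)^(m i) * L) :=
          mul_le_mul_of_nonneg_left (hlip.trans h2.le) (hc_nonneg i)
      _ = c i * (2:ℝ)^(m i) * L := by ring
  have claim : ∀ K, ∑ i ∈ Finset.range (K+1), c i * (2:ℝ)^(m i) ≤ (2:ℝ)^(m K + 1) := by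
    intro K
    induction K with
    | zero =>
      rw [Finset.sum_range_one, hc0, zero_mul]
      positivity
    | succ K ih =>
      rw [Finset.sum_range_succ]
      have hc1 : c (K+1) ≤ 1 := (hc_le (K+1)).trans (pow_le_one₀ (by norm_num) (by norm_num))
      have hpos : (0:ℝ) < (2:ℝ)^(m (K+1)) := by positivity
      have h1 : c (K+1) * (2:ℝ)^(m (K+1)) ≤ (2:ℝ)^(m (K+1)) := by nlinarith
      have h2 : (2:ℝ)^(m K + 1) ≤ (2:ℝ)^(m (K+1)) :=
        pow_le_pow_right₀ (by norm_num) (by have := hm1 K; omega)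
      have h3 : (2:ℝ)^(m (K+1)) + (2:ℝ)^(m (K+1)) = (2:ℝ)^(m (K+1)+1) := by
        rw [pow_succ]; ring
      linarith
  have hsum_small : ∑ i ∈ Finset.range (k+1), |f i x - f i y| ≤ (2:ℝ)^(m k + 1) * L := by
    calc ∑ i ∈ Finset.range (k+1), |f i x - f i y|
        ≤ ∑ i ∈ Finset.range (k+1), c i * (2:ℝ)^(m i) * L :=
          Finset.sum_le_sum (fun i _ => hterm_small i)
      _ = (∑ i ∈ Finset.range (k+1), c i * (2:ℝ)^(m i)) * L := by rw [← Finset.sum_mul]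
      _ ≤ (2:ℝ)^(m k + 1) * L := mul_le_mul_of_nonneg_right (claim k) hL0.le
  have herr : (2:ℝ)^(m k + 1) * L ≤ (2⁻¹:ℝ)^(k+4) := by
    have hd : m k + 1 + (k+4) ≤ m (k+1) + 1 := by have := hm1 k; omega
    have hpow2 : ∀ p q : ℕ, p ≤ q → (2:ℝ)^p * (2⁻¹:ℝ)^q = (2⁻¹:ℝ)^(q - p) := by
      intro p q h
      have h2 : (0:ℝ) < (2:ℝ)^p := by positivity
      have h3 : (0:ℝ) < (2:ℝ)^q := by positivity
      rw [show q = p + (q - p) by omega, pow_add, Nat.add_sub_cancel_left, ← mul_assoc, ← mul_pow]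
      norm_num
    have heq : (2:ℝ)^(m k + 1) * L = (2⁻¹:ℝ)^(m (k+1) + 1 - (m k + 1)) := by
      rw [hL]; exact hpow2 _ _ (by have := hm1 k; omega)
    rw [heq]
    exact pow_le_pow_of_le_one (by norm_num) (by norm_num) (by omega)
  have habs : |f (k+1) x - f (k+1) y| - ∑ i ∈ Finset.range (k+1), |f i x - f i y|
      ≤ |φ x - φ y| := by
    rw [hdiff, Finset.sum_range_succ (fun i => f i x - f i y) (k+1)]
    set Sm := ∑ i ∈ Finset.range (k+1), (f i x - f i y) with hSm
    set T := f (k+1) x - f (k+1) y with hT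
    have h1 : |T| ≤ |Sm + T| + |Sm| := by
      calc |T| = |(Sm + T) - Sm| := by rw [add_sub_cancel_left]
        _ ≤ |Sm + T| + |Sm| := abs_sub _ _
    have h2 : |Sm| ≤ ∑ i ∈ Finset.range (k+1), |f i x - f i y| :=
      Finset.abs_sum_le_sum_abs _ _
    linarith
  have hsn : s n ≤ s (m k) := hanti (le_of_lt (hj2 k (by omega)))
  have hckey : c (k+1) * (1/2) = s (m k) + (2⁻¹:ℝ)^(k+3) := by
    rw [hcs]
    have : (2⁻¹:ℝ)^(k+2) * (1/2) = (2⁻¹:ℝ)^(k+3) := by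
      rw [pow_add, pow_add]; ring
    linarith [this]
  have hp34 : (2⁻¹:ℝ)^(k+4) ≤ (2⁻¹:ℝ)^(k+3) :=
    pow_le_pow_of_le_one (by norm_num) (by norm_num) (by omega)
  have hmain : s n ≤ |φ x - φ y| := by
    linarith [habs, hsum_small, herr, hterm_main, hckey, hsn, hp34]
  have hbdd : BddAbove {t : ℝ | ∃ x ∈ Icc A B, ∃ y ∈ Icc A B, t = |φ x - φ y|} := by
    refine ⟨1, ?_⟩
    rintro t ⟨x', hx', y', hy', rfl⟩
    have h1 := hrange x'
    have h2 := hrange y'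
    rw [abs_sub_le_iff]
    constructor <;> [skip; skip] <;>
      · obtain ⟨ha1, ha2⟩ := h1; obtain ⟨hb1, hb2⟩ := h2; linarith
  have hmem : |φ x - φ y| ∈ {t : ℝ | ∃ x ∈ Icc A B, ∃ y ∈ Icc A B, t = |φ x - φ y|} :=
    ⟨x, hxmem, y, hymem, rfl⟩
  exact hmain.trans (le_csSup hbdd hmem)
end
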